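/- arXiv:2006.09927 — 6 statements merged into one kernel-verified Lean document; each statement's English description precedes it below -/
import Mathlib

section
/- In the complete graph K_n with root vertex r, the star cycle family rooted at r is tree-robust: for every spanning tree T of K_n there exists an ordering π of the binom(n-1,2) star triangles such that for every index i ≥ 2, the triangle C_{π(i)} contains an edge that is not an edge of T and is not an edge of any earlier triangle C_{π(1)}, …, C_{π(i-1)}. -/
open Finset

/-- The star triangle rooted at `r` associated to an unordered pair `{j, k}`:
the edge set `{ {j,k}, {r,j}, {r,k} }` of the triangle through `r`, `j`, `k`. -/
def starTriangle {V : Type*} [DecidableEq V] (r : V) : Sym2 V → Finset (Sym2 V) :=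
  Sym2.lift ⟨fun j k => {s(j, k), s(r, j), s(r, k)}, by
    intro j k
    show ({s(j,k), s(r,j), s(r,k)} : Finset (Sym2 V)) = {s(k,j), s(r,k), s(r,j)}
    rw [Sym2.eq_swap]
    simp [Finset.pair_comm]⟩

/-- The index set of the star cycle family rooted at `r`: all unordered pairs
`{j, k}` of distinct vertices avoiding the root `r`. -/
def starPairs (V : Type*) [Fintype V] [DecidableEq V] (r : V) : Finset (Sym2 V) :=
  Finset.univ.filter (fun e : Sym2 V => ¬ e.IsDiag ∧ r ∉ e)

section AuxTree

variable {V : Type*} [DecidableEq V] {G : SimpleGraph V}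

set_option linter.unusedSectionVars false

lemma aux_isPath_concat {u v w : V} {p : G.Walk u v} (hp : p.IsPath) (h : G.Adj v w)
    (hw : w ∉ p.support) : (p.concat h).IsPath := by
  rw [← SimpleGraph.Walk.isPath_reverse_iff, SimpleGraph.Walk.reverse_concat]
  rw [SimpleGraph.Walk.cons_isPath_iff]
  refine ⟨hp.reverse, ?_⟩
  simpa using hw

lemma aux_length_pos {u v : V} (p : G.Walk u v) (h : u ≠ v) : 0 < p.length := by
  cases p with
  | nil => exact absurd rfl h
  | cons h q => simp

lemma tree_adj_dist (hG : G.IsTree) (r : V) {a b : V} (h : G.Adj a b) :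
    G.dist r a = G.dist r b + 1 ∨ G.dist r b = G.dist r a + 1 := by
  obtain ⟨q, hq, hql⟩ := hG.isConnected.exists_path_of_dist r b
  by_cases ha : a ∈ q.support
  · right
    have hsplit := congr_arg SimpleGraph.Walk.length (q.take_spec ha)
    rw [SimpleGraph.Walk.length_append] at hsplit
    have h1 : G.dist r a ≤ (q.takeUntil a ha).length := SimpleGraph.dist_le _
    have h2 : 0 < (q.dropUntil a ha).length := aux_length_pos _ h.ne
    have h3 : G.dist r b ≤ G.dist r a + 1 := by
      obtain ⟨p, hp, hpl⟩ := hG.isConnected.exists_path_of_dist r a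
      have := SimpleGraph.dist_le (p.concat h)
      rwa [SimpleGraph.Walk.length_concat, hpl] at this
    omega
  · left
    have hpath : (q.concat h.symm).IsPath := aux_isPath_concat hq h.symm ha
    obtain ⟨p, hp, hpl⟩ := hG.isConnected.exists_path_of_dist r a
    have := (hG.existsUnique_path r a).unique hp hpath
    have hlen := congr_arg SimpleGraph.Walk.length this
    rw [SimpleGraph.Walk.length_concat, hql, hpl] at hlen
    exact hlen

lemma tree_unique_parent (hG : G.IsTree) {r a b c : V} (hab : G.Adj a b) (hac : G.Adj a c)
    (hb : G.dist r b + 1 = G.dist r a) (hc : G.dist r c + 1 = G.dist r a) : b = c := by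
  obtain ⟨qb, hqb, hqbl⟩ := hG.isConnected.exists_path_of_dist r b
  obtain ⟨qc, hqc, hqcl⟩ := hG.isConnected.exists_path_of_dist r c
  have hab' : a ∉ qb.support := by
    intro hmem
    have h1 : G.dist r a ≤ (qb.takeUntil a hmem).length := SimpleGraph.dist_le _
    have h2 := SimpleGraph.Walk.length_takeUntil_le qb hmem
    omega
  have hac' : a ∉ qc.support := by
    intro hmem
    have h1 : G.dist r a ≤ (qc.takeUntil a hmem).length := SimpleGraph.dist_le _
    have h2 := SimpleGraph.Walk.length_takeUntil_le qc hmem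
    omega
  have h1 : (qb.concat hab.symm).IsPath := aux_isPath_concat hqb hab.symm hab'
  have h2 : (qc.concat hac.symm).IsPath := aux_isPath_concat hqc hac.symm hac'
  have heq := (hG.existsUnique_path r a).unique h1 h2
  obtain ⟨hv, -⟩ := SimpleGraph.Walk.concat_inj heq
  exact hv

/-- Membership in a star triangle. -/
lemma mem_starTriangle_iff' (r : V) (e : Sym2 V) (f : Sym2 V) :
    f ∈ starTriangle r e ↔ f = e ∨ ∃ x ∈ e, f = s(r, x) := by
  induction e using Sym2.inductionOn with
  | hf a b =>
    simp only [starTriangle, Sym2.lift_mk, Finset.mem_insert, Finset.mem_singleton,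
      Sym2.mem_iff]
    constructor
    · rintro (h | h | h)
      · exact Or.inl h
      · exact Or.inr ⟨a, Or.inl rfl, h⟩
      · exact Or.inr ⟨b, Or.inr rfl, h⟩
    · rintro (h | ⟨x, (rfl | rfl), h⟩)
      · exact Or.inl h
      · exact Or.inr (Or.inl h)
      · exact Or.inr (Or.inr h)

/-- For a tree edge avoiding the root `r`, choose the endpoint farther from `r`. -/
lemma exists_deep (hG : G.IsTree) (r : V) (e : Sym2 V) (hr : r ∉ e)
    (het : e ∈ G.edgeSet) :
    ∃ a b, e = s(a, b) ∧ G.Adj a b ∧ a ≠ r ∧ b ≠ r ∧ G.dist r b + 1 = G.dist r a := by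
  induction e using Sym2.inductionOn with
  | hf x y =>
    have hadj : G.Adj x y := het
    have hx : x ≠ r := fun h => hr (h ▸ Sym2.mem_mk_left x y)
    have hy : y ≠ r := fun h => hr (h ▸ Sym2.mem_mk_right x y)
    rcases tree_adj_dist hG r hadj with h | h
    · exact ⟨x, y, rfl, hadj, hx, hy, h.symm⟩
    · exact ⟨y, x, Sym2.eq_swap, hadj.symm, hy, hx, h.symm⟩

end AuxTree

/-- **The star cycle family of a complete graph is tree-robust.**
Let `V` be a finite vertex set with at least 3 vertices and `r ∈ V` a root.
For every spanning tree `T` of the complete graph on `V` (i.e. every tree on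
the vertex set `V`), there is an ordering `π` of the star triangles rooted at
`r` such that every triangle except the first contains an edge that is neither
an edge of `T` nor an edge of any earlier triangle in the ordering. -/
theorem starCycleFamily_treeRobust (V : Type*) [Fintype V] [DecidableEq V]
    (hV : 3 ≤ Fintype.card V) (r : V)
    (T : SimpleGraph V) (hT : T.IsTree) :
    ∃ π : Fin (starPairs V r).card ≃ {e : Sym2 V // e ∈ starPairs V r},
      ∀ i : Fin (starPairs V r).card, 0 < i.val →
        ∃ f ∈ starTriangle r (π i).val,
          f ∉ T.edgeSet ∧ ∀ j : Fin (starPairs V r).card, j < i →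
            f ∉ starTriangle r (π j).val := by
  classical
  -- weight of a pair: for tree edges the larger distance from `r`, else a big number
  set D : ℕ := Finset.univ.sup (T.dist r) with hD
  let md : Sym2 V → ℕ := Sym2.lift ⟨fun a b => max (T.dist r a) (T.dist r b),
    fun a b => by simp [max_comm]⟩
  let w : Sym2 V → ℕ := fun e => if e ∈ T.edgeSet then md e else D + 1
  set M : ℕ := Fintype.card (Sym2 V) with hM
  let enc : Sym2 V → ℕ := fun e => (Fintype.equivFin (Sym2 V) e : ℕ)
  let key : Sym2 V → ℕ := fun e => w e * M + enc e
  have hencM : ∀ e, enc e < M := fun e => (Fintype.equivFin (Sym2 V) e).isLt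
  have hkeydiv : ∀ e, key e / M = w e ∧ key e % M = enc e := by
    intro e
    have hMpos : 0 < M := lt_of_le_of_lt (Nat.zero_le _) (hencM e)
    constructor
    · show (w e * M + enc e) / M = w e
      rw [Nat.mul_comm, Nat.mul_add_div hMpos, Nat.div_eq_of_lt (hencM e), Nat.add_zero]
    · show (w e * M + enc e) % M = enc e
      rw [Nat.mul_comm, Nat.mul_add_mod, Nat.mod_eq_of_lt (hencM e)]
  have hkeyinj : Function.Injective key := by
    intro x y h
    obtain ⟨hx1, hx2⟩ := hkeydiv x
    obtain ⟨hy1, hy2⟩ := hkeydiv y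
    have he : enc x = enc y := by rw [← hx2, ← hy2, h]
    exact (Fintype.equivFin (Sym2 V)).injective (Fin.val_injective he)
  have hwle : ∀ x y : Sym2 V, key x < key y → w x ≤ w y := by
    intro x y h
    obtain ⟨hx1, -⟩ := hkeydiv x
    obtain ⟨hy1, -⟩ := hkeydiv y
    rw [← hx1, ← hy1]
    exact Nat.div_le_div_right h.le
  have hcard : Fintype.card {e : Sym2 V // e ∈ starPairs V r} = (starPairs V r).card :=
    Fintype.card_coe _
  obtain ⟨π, hmono⟩ : ∃ π : Fin (starPairs V r).card ≃ {e : Sym2 V // e ∈ starPairs V r},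
      ∀ j i : Fin (starPairs V r).card, j < i → key (π j).val < key (π i).val := by
    letI lin : LinearOrder {e : Sym2 V // e ∈ starPairs V r} :=
      LinearOrder.lift' (fun x => key x.val) (fun x y h => Subtype.ext (hkeyinj h))
    letI : Preorder {e : Sym2 V // e ∈ starPairs V r} := lin.toPreorder
    exact ⟨(monoEquivOfFin _ hcard).toEquiv,
      fun j i h => (monoEquivOfFin _ hcard).strictMono h⟩
  refine ⟨π, ?_⟩
  intro i hi
  obtain ⟨-, hdiag, hroot⟩ := Finset.mem_filter.mp (π i).2
  by_cases het : ((π i : {e : Sym2 V // e ∈ starPairs V r}) : Sym2 V) ∈ T.edgeSet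
  · -- tree pair: use the star edge to the deeper endpoint
    obtain ⟨a, b, hab, hadj, har, hbr, hdist⟩ := exists_deep hT r _ hroot het
    have heta : s(a, b) ∈ T.edgeSet := hab ▸ het
    have hwi : w (π i).val = T.dist r a := by
      rw [hab]
      simp only [w, if_pos heta, md, Sym2.lift_mk]
      omega
    refine ⟨s(r, a), ?_, ?_, ?_⟩
    · rw [mem_starTriangle_iff', hab]
      exact Or.inr ⟨a, Sym2.mem_mk_left a b, rfl⟩
    · -- s(r, a) is not a tree edge
      intro hmem
      have hadjra : T.Adj r a := hmem
      rcases tree_adj_dist hT r hadjra with h | h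
      · rw [SimpleGraph.dist_self] at h; omega
      · rw [SimpleGraph.dist_self] at h
        have hb0 : T.dist r b = 0 := by omega
        exact hbr (hT.isConnected.dist_eq_zero_iff.mp hb0).symm
    · intro j hj hmem
      have hkey := hmono j i hj
      have hwle' := hwle _ _ hkey
      obtain ⟨-, hdiag', hroot'⟩ := Finset.mem_filter.mp (π j).2
      rw [mem_starTriangle_iff'] at hmem
      rcases hmem with h | ⟨x, hx, hxe⟩
      · exact hroot' (h ▸ Sym2.mem_mk_left r a)
      · -- s(r,a) = s(r,x), so a = x ∈ π j
        have hax : a = x := by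
          rw [Sym2.eq_iff] at hxe
          rcases hxe with ⟨-, h⟩ | ⟨-, h⟩
          · exact h
          · exact absurd h har
        subst hax
        -- `a` is a vertex of the earlier pair `π j`
        by_cases het' : ((π j : {e : Sym2 V // e ∈ starPairs V r}) : Sym2 V) ∈ T.edgeSet
        · obtain ⟨a', b', hab', hadj', har', hbr', hdist'⟩ := exists_deep hT r _ hroot' het'
          have heta' : s(a', b') ∈ T.edgeSet := hab' ▸ het'
          have hwj : w (π j).val = T.dist r a' := by
            rw [hab']
            simp only [w, if_pos heta', md, Sym2.lift_mk]
            omega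
          rw [hwj, hwi] at hwle'
          rw [hab', Sym2.mem_iff] at hx
          rcases hx with rfl | rfl
          · -- same deeper endpoint : same tree edge, contradiction with strict order
            have hbb : b = b' := tree_unique_parent hT hadj hadj' hdist hdist'
            have hee : (π j).val = (π i).val := by rw [hab, hab', hbb]
            rw [hee] at hkey
            exact lt_irrefl _ hkey
          · -- a is the shallow endpoint of π j: weight too big
            omega
        · have hwj : w (π j).val = D + 1 := by simp only [w, if_neg het']
          have hle : T.dist r a ≤ D := Finset.le_sup (Finset.mem_univ a)
          rw [hwj, hwi] at hwle'
          omega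
  · -- non-tree pair: its own base edge works
    refine ⟨(π i).val, ?_, het, ?_⟩
    · rw [mem_starTriangle_iff']; exact Or.inl rfl
    · intro j hj hmem
      have hkey := hmono j i hj
      obtain ⟨-, hdiag', hroot'⟩ := Finset.mem_filter.mp (π j).2
      rw [mem_starTriangle_iff'] at hmem
      rcases hmem with h | ⟨x, hx, hxe⟩
      · rw [← h] at hkey; exact lt_irrefl _ hkey
      · exact hroot (hxe ▸ Sym2.mem_mk_left r x)
end

section
/- For all probability mass functions b_i on X_i (i ∈ V), the mean-field free energy satisfies F_MF ≥ -ln Z; equivalently, the mean-field method yields the lower bound ln Z ≥ Σ_{a∈F} Σ_x (ln ψ_a(x)) · ∏_{i∈V} b_i(x_i) - Σ_{i∈V} Σ_{s∈X_i} b_i(s) · ln b_i(s) on the log-partition function. -/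
open Finset

/-- Termwise Gibbs-type inequality. -/
lemma gibbs_term (q r Z : ℝ) (hq : 0 ≤ q) (hr : 0 < r) (hZ : 0 < Z) :
    q * Real.log r - q * Real.log q - q * Real.log Z ≤ r / Z - q := by
  rcases eq_or_lt_of_le hq with h | h
  · subst h; simp; positivity
  · have ht : 0 < r / (q * Z) := by positivity
    have := Real.log_le_sub_one_of_pos ht
    have hlog : Real.log (r / (q * Z)) = Real.log r - Real.log q - Real.log Z := by
      rw [Real.log_div hr.ne' (by positivity), Real.log_mul h.ne' hZ.ne']; ring
    have h2 : q * Real.log (r / (q * Z)) ≤ q * (r / (q * Z) - 1) :=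
      mul_le_mul_of_nonneg_left this hq
    calc q * Real.log r - q * Real.log q - q * Real.log Z
        = q * Real.log (r / (q * Z)) := by rw [hlog]; ring
      _ ≤ q * (r / (q * Z) - 1) := h2
      _ = r / Z - q := by field_simp

/-- Distribute a sum over a pi-type into a product of sums. -/
lemma sum_pi_prod {V : Type*} [Fintype V] [DecidableEq V]
    {X : V → Type*} [∀ i, Fintype (X i)] (f : (i : V) → X i → ℝ) :
    ∑ x : (i : V) → X i, ∏ i : V, f i (x i) = ∏ i : V, ∑ s : X i, f i s := by
  rw [Finset.prod_univ_sum, Fintype.piFinset_univ]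

/-- The mean-field free energy of single-variable beliefs `b i : X i → ℝ`,
for a factor model with factors indexed by `A`, potentials `ψ a`:
`F_MF = -Σ_a Σ_x ln ψ_a(x) · Π_i b_i(x_i) + Σ_i Σ_s b_i(s) · ln b_i(s)`. -/
noncomputable def meanFieldFreeEnergy {V : Type*} [Fintype V] [DecidableEq V]
    {X : V → Type*} [∀ i, Fintype (X i)]
    {A : Type*} [Fintype A]
    (ψ : A → ((i : V) → X i) → ℝ) (b : (i : V) → X i → ℝ) : ℝ :=
  -∑ a : A, ∑ x : (i : V) → X i, Real.log (ψ a x) * ∏ i : V, b i (x i)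
    + ∑ i : V, ∑ s : X i, b i s * Real.log (b i s)

/-- **Mean-field lower bound on the log-partition function.**
For all probability mass functions `b_i` on `X_i`, the mean-field free energy
satisfies `F_MF ≥ -ln Z` where `Z = Σ_x Π_a ψ_a(x)`; equivalently the
mean-field method lower-bounds `ln Z`. -/
theorem mean_field_lower_bound (V : Type*) [Fintype V] [DecidableEq V]
    (X : V → Type*) [∀ i, Fintype (X i)] [∀ i, Nonempty (X i)]
    (A : Type*) [Fintype A] (S : A → Finset V)
    (ψ : A → ((i : V) → X i) → ℝ) (hψ : ∀ a x, 0 < ψ a x)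
    (hscope : ∀ a x y, (∀ i ∈ S a, x i = y i) → ψ a x = ψ a y)
    (b : (i : V) → X i → ℝ) (hb0 : ∀ i s, 0 ≤ b i s) (hb1 : ∀ i, ∑ s, b i s = 1) :
    -Real.log (∑ x : (i : V) → X i, ∏ a : A, ψ a x) ≤ meanFieldFreeEnergy ψ b := by
  classical
  set q : ((i : V) → X i) → ℝ := fun x => ∏ i, b i (x i) with hqdef
  set r : ((i : V) → X i) → ℝ := fun x => ∏ a, ψ a x with hrdef
  have hq0 : ∀ x, 0 ≤ q x := fun x => Finset.prod_nonneg fun i _ => hb0 i (x i)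
  have hr0 : ∀ x, 0 < r x := fun x => Finset.prod_pos fun a _ => hψ a x
  set Z : ℝ := ∑ x : (i : V) → X i, r x with hZdef
  have hZ : 0 < Z := Finset.sum_pos (fun x _ => hr0 x) univ_nonempty
  have hqsum : ∑ x : (i : V) → X i, q x = 1 := by
    rw [hqdef]
    simp only [sum_pi_prod b]
    simp [hb1]
  -- energy term
  have hE : ∑ a : A, ∑ x : (i : V) → X i, Real.log (ψ a x) * q x
      = ∑ x : (i : V) → X i, q x * Real.log (r x) := by
    rw [Finset.sum_comm]
    refine Finset.sum_congr rfl fun x _ => ?_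
    rw [hrdef]
    rw [Real.log_prod (fun a _ => (hψ a x).ne'), Finset.mul_sum]
    exact Finset.sum_congr rfl fun a _ => (mul_comm _ _)
  -- entropy term
  have hH : ∑ i : V, ∑ s : X i, b i s * Real.log (b i s)
      = ∑ x : (i : V) → X i, q x * Real.log (q x) := by
    have step1 : ∀ x : (i : V) → X i,
        q x * Real.log (q x) = ∑ j : V, q x * Real.log (b j (x j)) := by
      intro x
      rcases eq_or_lt_of_le (hq0 x) with h | h
      · simp [← h]
      · have hne : ∀ i : V, b i (x i) ≠ 0 := by
          intro i hi
          rw [hqdef] at h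
          have : (∏ k : V, b k (x k)) = 0 :=
            Finset.prod_eq_zero (Finset.mem_univ i) hi
          simpa [this] using h
        rw [hqdef]
        simp only
        rw [Real.log_prod (fun i _ => hne i), Finset.mul_sum]
    rw [Finset.sum_congr rfl (fun x _ => step1 x), Finset.sum_comm]
    refine Finset.sum_congr rfl fun j _ => ?_
    -- ∑ x, q x * log (b j (x j)) = ∑ s, b j s * log (b j s)
    have key : ∑ x : (i : V) → X i, q x * Real.log (b j (x j))
        = ∑ s : X j, b j s * Real.log (b j s) := by
      set F : (i : V) → X i → ℝ :=
        fun i s => if i = j then b i s * Real.log (b i s) else b i s with hF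
      have hterm : ∀ x : (i : V) → X i,
          q x * Real.log (b j (x j)) = ∏ i : V, F i (x i) := by
        intro x
        rw [hqdef]
        simp only
        rw [← Finset.mul_prod_erase univ (fun i => F i (x i)) (mem_univ j),
            ← Finset.mul_prod_erase univ (fun i => b i (x i)) (mem_univ j)]
        have h1 : F j (x j) = b j (x j) * Real.log (b j (x j)) := by simp [hF]
        have h2 : ∀ i ∈ univ.erase j, F i (x i) = b i (x i) := by
          intro i hi
          simp [hF, Finset.ne_of_mem_erase hi]
        rw [h1, Finset.prod_congr rfl h2]
        ring
      rw [Finset.sum_congr rfl fun x _ => hterm x, sum_pi_prod F]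
      rw [← Finset.mul_prod_erase univ (fun i => ∑ s, F i s) (mem_univ j)]
      have h1 : ∑ s, F j s = ∑ s : X j, b j s * Real.log (b j s) := by simp [hF]
      have h2 : ∀ i ∈ univ.erase j, (∑ s, F i s) = 1 := by
        intro i hi
        have : ∀ s : X i, F i s = b i s := fun s => by
          simp [hF, Finset.ne_of_mem_erase hi]
        rw [Finset.sum_congr rfl fun s _ => this s, hb1]
      rw [h1, Finset.prod_congr rfl h2]
      simp
    rw [key]
  -- main inequality
  unfold meanFieldFreeEnergy
  have hmain : ∑ x : (i : V) → X i,
      (q x * Real.log (r x) - q x * Real.log (q x) - q x * Real.log Z)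
      ≤ ∑ x : (i : V) → X i, (r x / Z - q x) :=
    Finset.sum_le_sum fun x _ => gibbs_term (q x) (r x) Z (hq0 x) (hr0 x) hZ
  have hL : ∑ x : (i : V) → X i,
      (q x * Real.log (r x) - q x * Real.log (q x) - q x * Real.log Z)
      = (∑ x : (i : V) → X i, q x * Real.log (r x))
        - (∑ x : (i : V) → X i, q x * Real.log (q x)) - Real.log Z := by
    rw [Finset.sum_sub_distrib, Finset.sum_sub_distrib, ← Finset.sum_mul, hqsum, one_mul]
  have hR : ∑ x : (i : V) → X i, (r x / Z - q x) = 0 := by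
    rw [Finset.sum_sub_distrib, ← Finset.sum_div, ← hZdef, div_self hZ.ne', hqsum, sub_self]
  rw [hL, hR] at hmain
  have : ∑ a : A, ∑ x : (i : V) → X i, Real.log (ψ a x) * ∏ i : V, b i (x i)
      = ∑ x : (i : V) → X i, q x * Real.log (r x) := hE
  rw [this, hH]
  linarith
end

section
/- Fix i ∈ V and strictly positive probability mass functions b_j on X_j for all j ≠ i, and define m_i(s) = Σ_{a∈F} Σ_{x : x_i = s} (ln ψ_a(x)) · ∏_{j≠i} b_j(x_j) for s ∈ X_i. Then over all probability mass functions q on X_i, the mean-field free energy F_MF with b_i := q (and the other b_j fixed) is minimized at q*(s) = exp(m_i(s)) / Σ_{t∈X_i} exp(m_i(t)), and q* is the unique minimizer; i.e., the coordinate-wise minimizer of the mean-field free energy is given by the mean-field update rule ln b_i(x_i) ∝ Σ_a Σ_{x_a∖x_i} ln ψ_a(x_a) ∏_{j} b_j(x_j). -/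
open Finset

/-- **Mean-field coordinate update rule.**
Fix `i` and strictly positive pmfs `b j` for `j ≠ i`, and let
`m s = Σ_a Σ_{x : x i = s} ln ψ_a(x) · Π_{j ≠ i} b_j(x_j)`.
Then over all pmfs `q` on `X i`, the mean-field free energy with `b i := q`
(and the other coordinates fixed) is uniquely minimized at
`q*(s) = exp (m s) / Σ_t exp (m t)`. -/
theorem mean_field_update_minimizer (V : Type*) [Fintype V] [DecidableEq V]
    (X : V → Type*) [∀ i, Fintype (X i)] [∀ i, Nonempty (X i)] [∀ i, DecidableEq (X i)]
    (A : Type*) [Fintype A] (S : A → Finset V)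
    (ψ : A → ((i : V) → X i) → ℝ) (hψ : ∀ a x, 0 < ψ a x)
    (hscope : ∀ a x y, (∀ i ∈ S a, x i = y i) → ψ a x = ψ a y)
    (i : V) (b : (j : V) → X j → ℝ)
    (hb0 : ∀ j, j ≠ i → ∀ s, 0 < b j s) (hb1 : ∀ j, j ≠ i → ∑ s, b j s = 1)
    (m : X i → ℝ)
    (hm : ∀ s, m s = ∑ a : A, ∑ x ∈ Finset.univ.filter (fun x : (j : V) → X j => x i = s),
      Real.log (ψ a x) * ∏ j ∈ Finset.univ.erase i, b j (x j))
    (qstar : X i → ℝ)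
    (hqstar : ∀ s, qstar s = Real.exp (m s) / ∑ t : X i, Real.exp (m t)) :
    ∀ q : X i → ℝ, (∀ s, 0 ≤ q s) → (∑ s, q s = 1) →
      meanFieldFreeEnergy ψ (Function.update b i qstar)
          ≤ meanFieldFreeEnergy ψ (Function.update b i q) ∧
        (meanFieldFreeEnergy ψ (Function.update b i q)
            = meanFieldFreeEnergy ψ (Function.update b i qstar) → q = qstar) := by
  intro q hq0 hq1
  set Z : ℝ := ∑ t : X i, Real.exp (m t) with hZdef
  have hZ : 0 < Z := Finset.sum_pos (fun t _ => Real.exp_pos _) Finset.univ_nonempty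
  have hqs_pos : ∀ s, 0 < qstar s := fun s => by
    rw [hqstar]; exact div_pos (Real.exp_pos _) hZ
  have hqs_sum : ∑ s, qstar s = 1 := by
    simp_rw [hqstar]; rw [← Finset.sum_div]; exact div_self (ne_of_gt hZ)
  have hlogqs : ∀ s, Real.log (qstar s) = m s - Real.log Z := by
    intro s; rw [hqstar, Real.log_div (Real.exp_ne_zero _) (ne_of_gt hZ), Real.log_exp]
  set C : ℝ := ∑ j ∈ Finset.univ.erase i, ∑ s, b j s * Real.log (b j s) with hCdef
  -- Reduction of the free energy to a function of the i-th coordinate only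
  have hF : ∀ r : X i → ℝ, meanFieldFreeEnergy ψ (Function.update b i r)
      = (∑ s, (r s * Real.log (r s) - r s * m s)) + C := by
    intro r
    have hprod : ∀ x : (j : V) → X j, (∏ j, Function.update b i r j (x j))
        = r (x i) * ∏ j ∈ Finset.univ.erase i, b j (x j) := by
      intro x
      rw [← Finset.mul_prod_erase Finset.univ _ (Finset.mem_univ i), Function.update_self]
      congr 1
      exact Finset.prod_congr rfl fun j hj => by
        rw [Function.update_of_ne (Finset.ne_of_mem_erase hj)]
    have h1 : ∑ a : A, ∑ x : (j : V) → X j,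
        Real.log (ψ a x) * ∏ j, Function.update b i r j (x j) = ∑ s, r s * m s := by
      have key : ∀ a : A, ∑ x : (j : V) → X j,
          Real.log (ψ a x) * ∏ j, Function.update b i r j (x j)
          = ∑ s, r s * ∑ x ∈ Finset.univ.filter (fun x : (j : V) → X j => x i = s),
              Real.log (ψ a x) * ∏ j ∈ Finset.univ.erase i, b j (x j) := by
        intro a
        rw [← Finset.sum_fiberwise_of_maps_to
          (fun x _ => Finset.mem_univ (x i))
          (fun x => Real.log (ψ a x) * ∏ j, Function.update b i r j (x j))]
        refine Finset.sum_congr rfl fun s _ => ?_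
        rw [Finset.mul_sum]
        refine Finset.sum_congr rfl fun x hx => ?_
        have hxi : x i = s := (Finset.mem_filter.mp hx).2
        rw [hprod x, hxi]; ring
      simp_rw [key]
      rw [Finset.sum_comm]
      refine Finset.sum_congr rfl fun s _ => ?_
      rw [hm, Finset.mul_sum]
    have h2 : ∑ j, ∑ s, Function.update b i r j s * Real.log (Function.update b i r j s)
        = (∑ s, r s * Real.log (r s)) + C := by
      rw [← Finset.add_sum_erase Finset.univ _ (Finset.mem_univ i)]
      congr 1
      · simp
      · exact Finset.sum_congr rfl fun j hj => by
          simp [Function.update_of_ne (Finset.ne_of_mem_erase hj)]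
    unfold meanFieldFreeEnergy
    rw [h1, h2, Finset.sum_sub_distrib]
    ring
  -- KL-divergence rewriting
  have hG : ∀ r : X i → ℝ, (∀ s, 0 ≤ r s) →
      (∑ s, (r s * Real.log (r s) - r s * m s))
      = (∑ s, r s * Real.log (r s / qstar s)) - Real.log Z * (∑ s, r s) := by
    intro r hr
    rw [Finset.mul_sum, ← Finset.sum_sub_distrib]
    refine Finset.sum_congr rfl fun s _ => ?_
    rcases eq_or_lt_of_le (hr s) with h | h
    · simp [← h]
    · rw [Real.log_div (ne_of_gt h) (ne_of_gt (hqs_pos s)), hlogqs]; ring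
  -- Pointwise Gibbs inequality
  have hpt : ∀ s, q s - qstar s ≤ q s * Real.log (q s / qstar s) := by
    intro s
    rcases eq_or_lt_of_le (hq0 s) with h | h
    · rw [← h]; simp [le_of_lt (hqs_pos s)]
    · have ht : 0 < qstar s / q s := div_pos (hqs_pos s) h
      have hlog := Real.log_le_sub_one_of_pos ht
      have : Real.log (q s / qstar s) = - Real.log (qstar s / q s) := by
        rw [Real.log_div (ne_of_gt h) (ne_of_gt (hqs_pos s)),
          Real.log_div (ne_of_gt (hqs_pos s)) (ne_of_gt h)]; ring
      rw [this]
      have hq' : qstar s / q s * q s = qstar s := div_mul_cancel₀ _ (ne_of_gt h)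
      nlinarith
  have hpt_strict : ∀ s, q s ≠ qstar s → q s - qstar s < q s * Real.log (q s / qstar s) := by
    intro s hne
    rcases eq_or_lt_of_le (hq0 s) with h | h
    · rw [← h]; simpa using hqs_pos s
    · have ht : 0 < qstar s / q s := div_pos (hqs_pos s) h
      have ht1 : qstar s / q s ≠ 1 := by
        intro h1
        exact hne ((div_eq_one_iff_eq (ne_of_gt h)).mp h1).symm
      have hlog := Real.log_lt_sub_one_of_pos ht ht1
      have : Real.log (q s / qstar s) = - Real.log (qstar s / q s) := by
        rw [Real.log_div (ne_of_gt h) (ne_of_gt (hqs_pos s)),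
          Real.log_div (ne_of_gt (hqs_pos s)) (ne_of_gt h)]; ring
      rw [this]
      have hq' : qstar s / q s * q s = qstar s := div_mul_cancel₀ _ (ne_of_gt h)
      nlinarith
  have hKL0 : 0 ≤ ∑ s, q s * Real.log (q s / qstar s) := by
    have := Finset.sum_le_sum (s := Finset.univ) (fun s _ => hpt s)
    rwa [Finset.sum_sub_distrib, hq1, hqs_sum, sub_self] at this
  have hKLstar : ∑ s, qstar s * Real.log (qstar s / qstar s) = 0 := by
    refine Finset.sum_eq_zero fun s _ => ?_
    rw [div_self (ne_of_gt (hqs_pos s)), Real.log_one, mul_zero]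
  have hFq : meanFieldFreeEnergy ψ (Function.update b i q)
      = (∑ s, q s * Real.log (q s / qstar s)) - Real.log Z + C := by
    rw [hF q, hG q hq0, hq1, mul_one]
  have hFqs : meanFieldFreeEnergy ψ (Function.update b i qstar)
      = -Real.log Z + C := by
    rw [hF qstar, hG qstar (fun s => le_of_lt (hqs_pos s)), hqs_sum, mul_one, hKLstar]
    ring
  constructor
  · rw [hFq, hFqs]; linarith
  · intro heq
    rw [hFq, hFqs] at heq
    have hKLzero : ∑ s, q s * Real.log (q s / qstar s) = 0 := by linarith
    by_contra hne
    obtain ⟨s0, hs0⟩ : ∃ s0, q s0 ≠ qstar s0 := by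
      by_contra h
      push_neg at h
      exact hne (funext h)
    have hlt : ∑ s, (q s - qstar s) < ∑ s, q s * Real.log (q s / qstar s) :=
      Finset.sum_lt_sum (fun s _ => hpt s) ⟨s0, Finset.mem_univ s0, hpt_strict s0 hs0⟩
    rw [Finset.sum_sub_distrib, hq1, hqs_sum, sub_self, hKLzero] at hlt
    exact lt_irrefl 0 hlt
end

section
/- Given a consistent belief system on the tree T, define b(x) = ( ∏_{{i,j}∈E(T)} b_{ij}(x_i, x_j) ) · ∏_{i∈V} b_i(x_i)^{1 - deg(i)} for x ∈ ∏_{i∈V} X_i. Then b is a probability mass function (b(x) > 0 for all x and Σ_x b(x) = 1), its single-variable marginals are the node beliefs (Σ_{x : x_i = s} b(x) = b_i(s) for every i ∈ V and s ∈ X_i), and its pairwise marginals on edges are the edge beliefs (Σ_{x : x_i = s, x_j = t} b(x) = b_{ij}(s,t) for every edge {i,j} ∈ E(T), s ∈ X_i, t ∈ X_j). -/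
open Finset

/-- The tree-factorized distribution
`b(x) = (Π_{{i,j} ∈ E(T)} b_{ij}(x_i, x_j)) · Π_i b_i(x_i)^{1 - deg(i)}`
built from node beliefs `b1` and (symmetric) pairwise beliefs `b2`. -/
noncomputable def treeFactorized {V : Type*} [Fintype V] [DecidableEq V]
    {X : V → Type*} (T : SimpleGraph V) [DecidableRel T.Adj]
    (b1 : (i : V) → X i → ℝ) (b2 : (i j : V) → X i → X j → ℝ)
    (hsym : ∀ i j s t, b2 i j s t = b2 j i t s)
    (x : (i : V) → X i) : ℝ :=
  (∏ e ∈ T.edgeFinset,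
      Sym2.lift ⟨fun i j => b2 i j (x i) (x j), fun i j => hsym i j (x i) (x j)⟩ e)
    * ∏ i : V, b1 i (x i) ^ ((1 : ℤ) - T.degree i)

section Aux

variable {V : Type*} [Fintype V] [DecidableEq V]
  {X : V → Type*} [∀ i, Fintype (X i)] [∀ i, Nonempty (X i)] [∀ i, DecidableEq (X i)]
  (b1 : (i : V) → X i → ℝ) (b2 : (i j : V) → X i → X j → ℝ)
  (hsym : ∀ i j s t, b2 i j s t = b2 j i t s)

/-- Every finite acyclic graph with an edge has a leaf. -/
lemma tfAux_exists_leaf (F : SimpleGraph V) [DecidableRel F.Adj] (hac : F.IsAcyclic)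
    (hne : F.edgeFinset.Nonempty) :
    ∃ ℓ p, F.Adj ℓ p ∧ F.neighborFinset ℓ = {p} := by
  classical
  obtain ⟨e, he⟩ := hne
  induction e using Sym2.ind with
  | _ a b =>
  have hab : F.Adj a b := SimpleGraph.mem_edgeFinset.mp he
  set P : ℕ → Prop := fun m => ∃ (u v : V) (q : F.Walk u v), q.IsPath ∧ q.length = m with hP
  have hP1 : P 1 := by
    refine ⟨a, b, SimpleGraph.Walk.cons hab SimpleGraph.Walk.nil, ?_, rfl⟩
    simp [SimpleGraph.Walk.cons_isPath_iff, hab.ne]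
  have hbound : ∀ m, P m → m ≤ Fintype.card V := by
    rintro m ⟨u, v, q, hq, rfl⟩
    exact hq.length_lt.le
  set N := Nat.findGreatest P (Fintype.card V) with hNdef
  have hN : P N := Nat.findGreatest_spec (hbound 1 hP1) hP1
  have hN1 : 1 ≤ N := Nat.le_findGreatest (hbound 1 hP1) hP1
  have hmax : ∀ m, P m → m ≤ N := fun m hm => Nat.le_findGreatest (hbound m hm) hm
  obtain ⟨u, v, q, hq, hqlen⟩ := hN
  cases q with
  | nil => simp at hqlen; omega
  | @cons _ z _ h q' =>
    have hq' : q'.IsPath ∧ u ∉ q'.support := (SimpleGraph.Walk.cons_isPath_iff h q').mp hq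
    have hclaim : ∀ y, F.Adj u y → y = z := by
      intro y hy
      by_contra hyz
      by_cases hmem : y ∈ q'.support
      · -- build a cycle
        set r := q'.takeUntil y hmem with hr
        have hrpath : r.IsPath := hq'.1.takeUntil hmem
        have hrsub : r.support ⊆ q'.support := SimpleGraph.Walk.support_takeUntil_subset q' hmem
        have husr : u ∉ r.support := fun hu => hq'.2 (hrsub hu)
        have hcyc : (SimpleGraph.Walk.cons hy.symm (SimpleGraph.Walk.cons h r)).IsCycle := by
          rw [SimpleGraph.Walk.cons_isCycle_iff]
          constructor
          · rw [SimpleGraph.Walk.cons_isPath_iff]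
            exact ⟨hrpath, husr⟩
          · rw [SimpleGraph.Walk.edges_cons]
            intro hmem'
            rcases List.mem_cons.mp hmem' with h1 | h2
            · rw [Sym2.eq_iff] at h1
              rcases h1 with ⟨h1a, h1b⟩ | ⟨h1a, h1b⟩
              · exact h.ne h1b
              · exact hyz h1a
            · exact husr (r.snd_mem_support_of_mem_edges h2)
        exact hac _ hcyc
      · -- extend the path
        have hlong : P (N + 1) := by
          refine ⟨y, v, SimpleGraph.Walk.cons hy.symm (SimpleGraph.Walk.cons h q'), ?_, ?_⟩
          · rw [SimpleGraph.Walk.cons_isPath_iff]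
            refine ⟨hq, ?_⟩
            rw [SimpleGraph.Walk.support_cons]
            intro hy'
            rcases List.mem_cons.mp hy' with h1 | h2
            · exact hy.ne' h1
            · exact hmem h2
          · simp only [SimpleGraph.Walk.length_cons]
            simp only [SimpleGraph.Walk.length_cons] at hqlen
            omega
        have := hmax _ hlong
        omega
    refine ⟨u, z, h, ?_⟩
    ext y
    simp only [SimpleGraph.mem_neighborFinset, Finset.mem_singleton]
    exact ⟨fun hy => hclaim y hy, fun hy => hy ▸ h⟩

/-- The auxiliary function: everything in `treeFactorized` except the `b1 ℓ` factor. -/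
noncomputable def tfAuxG (F : SimpleGraph V) [DecidableRel F.Adj] (ℓ : V)
    (x : (i : V) → X i) : ℝ :=
  (∏ e ∈ F.edgeFinset,
      Sym2.lift ⟨fun i j => b2 i j (x i) (x j), fun i j => hsym i j (x i) (x j)⟩ e)
    * ∏ i ∈ Finset.univ.erase ℓ, b1 i (x i) ^ ((1 : ℤ) - F.degree i)

lemma tfAuxG_update (F : SimpleGraph V) [DecidableRel F.Adj] (ℓ : V)
    (hiso : ∀ w, ¬ F.Adj ℓ w) (x : (i : V) → X i) (u : X ℓ) :
    tfAuxG b1 b2 hsym F ℓ (Function.update x ℓ u) = tfAuxG b1 b2 hsym F ℓ x := by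
  unfold tfAuxG
  congr 1
  · refine Finset.prod_congr rfl ?_
    intro e he
    revert he
    induction e using Sym2.ind with
    | _ a c =>
      intro he
      have hadj : F.Adj a c := SimpleGraph.mem_edgeFinset.mp he
      have ha : a ≠ ℓ := fun hh => hiso c (hh ▸ hadj)
      have hc : c ≠ ℓ := fun hh => hiso a (hh ▸ hadj.symm)
      rw [Sym2.lift_mk, Sym2.lift_mk]
      show b2 a c (Function.update x ℓ u a) (Function.update x ℓ u c) = b2 a c (x a) (x c)
      rw [Function.update_of_ne ha, Function.update_of_ne hc]
  · refine Finset.prod_congr rfl ?_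
    intro i hi
    rw [Function.update_of_ne (Finset.mem_erase.mp hi).1]

lemma tf_eq_isolated (F : SimpleGraph V) [DecidableRel F.Adj] (ℓ : V)
    (hiso : ∀ w, ¬ F.Adj ℓ w) (x : (i : V) → X i) :
    treeFactorized F b1 b2 hsym x = b1 ℓ (x ℓ) * tfAuxG b1 b2 hsym F ℓ x := by
  have hdeg : F.degree ℓ = 0 := by
    rw [← SimpleGraph.card_neighborFinset_eq_degree]
    refine Finset.card_eq_zero.mpr ?_
    ext w
    simp [SimpleGraph.mem_neighborFinset, hiso w]
  unfold treeFactorized tfAuxG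
  rw [← Finset.mul_prod_erase Finset.univ _ (Finset.mem_univ ℓ), hdeg,
    show ((1 : ℤ) - ((0 : ℕ) : ℤ)) = 1 by norm_num, zpow_one]
  ring

/-- Key summation lemma: if `ℓ` is isolated in `F`, then the `x ℓ` coordinate is
independent with law `b1 ℓ` under the factorized distribution. -/
lemma tfAux_key (F : SimpleGraph V) [DecidableRel F.Adj] (ℓ : V)
    (hiso : ∀ w, ¬ F.Adj ℓ w) (hb1s : ∑ u, b1 ℓ u = 1)
    (Θ : X ℓ → ((i : V) → X i) → ℝ)
    (hΘ : ∀ v x u, Θ v (Function.update x ℓ u) = Θ v x) :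
    (∑ x, treeFactorized F b1 b2 hsym x * Θ (x ℓ) x
        = ∑ u, b1 ℓ u * ∑ x, treeFactorized F b1 b2 hsym x * Θ u x)
    ∧ (∑ x, treeFactorized F b1 b2 hsym x * Θ (x ℓ) x
        = ∑ x, treeFactorized F b1 b2 hsym x * ∑ u, b1 ℓ u * Θ u x) := by
  classical
  set E := Equiv.piSplitAt ℓ X with hE
  have hcoord : ∀ (u : X ℓ) (y : ∀ j : {j // j ≠ ℓ}, X j), E.symm (u, y) ℓ = u := by
    intro u y; simp [hE]
  have hupd : ∀ (u u' : X ℓ) (y : ∀ j : {j // j ≠ ℓ}, X j),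
      E.symm (u, y) = Function.update (E.symm (u', y)) ℓ u := by
    intro u u' y
    funext j
    rcases eq_or_ne j ℓ with rfl | hj
    · simp [hE]
    · simp [hE, hj]
  obtain ⟨u₀⟩ := (inferInstance : Nonempty (X ℓ))
  set m : (∀ j : {j // j ≠ ℓ}, X j) → ℝ := fun y => tfAuxG b1 b2 hsym F ℓ (E.symm (u₀, y)) with hm
  set t : X ℓ → (∀ j : {j // j ≠ ℓ}, X j) → ℝ := fun v y => Θ v (E.symm (u₀, y)) with ht
  have h1 : ∀ u y, treeFactorized F b1 b2 hsym (E.symm (u, y)) = b1 ℓ u * m y := by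
    intro u y
    rw [tf_eq_isolated b1 b2 hsym F ℓ hiso, hcoord]
    congr 1
    rw [hupd u u₀ y, tfAuxG_update b1 b2 hsym F ℓ hiso]
  have h2 : ∀ v u y, Θ v (E.symm (u, y)) = t v y := by
    intro v u y
    rw [hupd u u₀ y, hΘ]
  have reindex : ∀ f : ((i : V) → X i) → ℝ, ∑ x, f x = ∑ u, ∑ y, f (E.symm (u, y)) := by
    intro f
    rw [← Equiv.sum_comp E.symm f, Fintype.sum_prod_type]
  have hL : ∑ x, treeFactorized F b1 b2 hsym x * Θ (x ℓ) x
      = ∑ u, b1 ℓ u * ∑ y, m y * t u y := by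
    rw [reindex]
    refine Finset.sum_congr rfl fun u _ => ?_
    rw [Finset.mul_sum]
    refine Finset.sum_congr rfl fun y _ => ?_
    rw [h1, hcoord, h2]
    ring
  have hZ : ∀ u, ∑ x, treeFactorized F b1 b2 hsym x * Θ u x = ∑ y, m y * t u y := by
    intro u
    rw [reindex]
    have : ∀ u' y, treeFactorized F b1 b2 hsym (E.symm (u', y)) * Θ u (E.symm (u', y))
        = b1 ℓ u' * (m y * t u y) := by
      intro u' y
      rw [h1, h2]
      ring
    calc ∑ u', ∑ y, treeFactorized F b1 b2 hsym (E.symm (u', y)) * Θ u (E.symm (u', y))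
        = ∑ u', b1 ℓ u' * ∑ y, m y * t u y := by
          refine Finset.sum_congr rfl fun u' _ => ?_
          rw [Finset.mul_sum]
          exact Finset.sum_congr rfl fun y _ => this u' y
      _ = (∑ u', b1 ℓ u') * ∑ y, m y * t u y := by rw [Finset.sum_mul]
      _ = ∑ y, m y * t u y := by rw [hb1s, one_mul]
  constructor
  · rw [hL]
    exact Finset.sum_congr rfl fun u _ => by rw [hZ u]
  · rw [hL, reindex]
    have : ∀ u' y, treeFactorized F b1 b2 hsym (E.symm (u', y)) * ∑ u, b1 ℓ u * Θ u (E.symm (u', y))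
        = b1 ℓ u' * (m y * ∑ u, b1 ℓ u * t u y) := by
      intro u' y
      rw [h1]
      have : ∀ u, b1 ℓ u * Θ u (E.symm (u', y)) = b1 ℓ u * t u y := fun u => by rw [h2]
      rw [Finset.sum_congr rfl fun u _ => this u]
      ring
    calc ∑ u, b1 ℓ u * ∑ y, m y * t u y
        = ∑ y, m y * ∑ u, b1 ℓ u * t u y := by
          rw [show (∑ u, b1 ℓ u * ∑ y, m y * t u y)
              = ∑ u, ∑ y, b1 ℓ u * (m y * t u y) from
            Finset.sum_congr rfl fun u _ => Finset.mul_sum _ _ _, Finset.sum_comm]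
          refine Finset.sum_congr rfl fun y _ => ?_
          rw [Finset.mul_sum]
          exact Finset.sum_congr rfl fun u _ => by ring
      _ = (∑ u', b1 ℓ u') * ∑ y, m y * ∑ u, b1 ℓ u * t u y := by rw [hb1s, one_mul]
      _ = ∑ u', ∑ y, b1 ℓ u' * (m y * ∑ u, b1 ℓ u * t u y) := by
          rw [Finset.sum_mul]
          exact Finset.sum_congr rfl fun u' _ => by rw [Finset.mul_sum]
      _ = ∑ u', ∑ y, treeFactorized F b1 b2 hsym (E.symm (u', y))
            * ∑ u, b1 ℓ u * Θ u (E.symm (u', y)) := by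
          refine Finset.sum_congr rfl fun u' _ => Finset.sum_congr rfl fun y _ => ?_
          rw [this u' y]

/-- Main induction: marginals of the factorized distribution on an acyclic graph. -/
lemma tfAux_main (hb1pos : ∀ i s, 0 < b1 i s) (hb1sum : ∀ i, ∑ s, b1 i s = 1) :
    ∀ (n : ℕ) (F : SimpleGraph V) [DecidableRel F.Adj], F.IsAcyclic →
    F.edgeFinset.card = n →
    (∀ i j, F.Adj i j → ∀ s : X i, ∑ t : X j, b2 i j s t = b1 i s) →
    ((∀ (i : V) (w : X i → ℝ),
        ∑ x, treeFactorized F b1 b2 hsym x * w (x i) = ∑ s, b1 i s * w s)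
      ∧ (∀ i j, F.Adj i j → ∀ w : X i → X j → ℝ,
        ∑ x, treeFactorized F b1 b2 hsym x * w (x i) (x j)
          = ∑ s, ∑ t, b2 i j s t * w s t)) := by
  intro n
  induction n with
  | zero =>
    intro F instF hac hcard hm
    have hempty : F.edgeFinset = ∅ := Finset.card_eq_zero.mp hcard
    have hnoadj : ∀ i j, ¬ F.Adj i j := by
      intro i j hij
      have : s(i, j) ∈ F.edgeFinset := SimpleGraph.mem_edgeFinset.mpr hij
      rw [hempty] at this
      exact absurd this (Finset.notMem_empty _)
    have hdeg : ∀ i, F.degree i = 0 := by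
      intro i
      rw [← SimpleGraph.card_neighborFinset_eq_degree]
      refine Finset.card_eq_zero.mpr ?_
      ext w
      simp [SimpleGraph.mem_neighborFinset, hnoadj i w]
    have htf : ∀ x, treeFactorized F b1 b2 hsym x = ∏ i, b1 i (x i) := by
      intro x
      unfold treeFactorized
      rw [hempty, Finset.prod_empty, one_mul]
      refine Finset.prod_congr rfl fun i _ => ?_
      rw [hdeg i, show ((1 : ℤ) - ((0 : ℕ) : ℤ)) = 1 by norm_num, zpow_one]
    have hZ : ∑ x, treeFactorized F b1 b2 hsym x = 1 := by
      rw [Finset.sum_congr rfl fun x _ => htf x, ← Fintype.prod_sum]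
      rw [Finset.prod_congr rfl fun i _ => hb1sum i, Finset.prod_const_one]
    constructor
    · intro i w
      have key := (tfAux_key b1 b2 hsym F i (hnoadj i) (hb1sum i)
        (fun u _ => w u) (fun v x u => rfl)).1
      rw [key]
      refine Finset.sum_congr rfl fun u _ => ?_
      rw [show ∑ x, treeFactorized F b1 b2 hsym x * w u
          = (∑ x, treeFactorized F b1 b2 hsym x) * w u by rw [Finset.sum_mul], hZ, one_mul]
    · intro i j hij
      exact absurd hij (hnoadj i j)
  | succ n ih =>
    intro F instF hac hcard hm
    -- find a leaf
    have hne : F.edgeFinset.Nonempty := Finset.card_pos.mp (by omega)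
    obtain ⟨ℓ, p, hadj, hnbr⟩ := tfAux_exists_leaf F hac hne
    have hℓp : ℓ ≠ p := hadj.ne
    -- the graph with the leaf edge removed
    set F' : SimpleGraph V := F.deleteEdges {s(ℓ, p)} with hF'
    haveI instF' : DecidableRel F'.Adj := fun a b =>
      decidable_of_iff (F.Adj a b ∧ ¬ s(a, b) = s(ℓ, p))
        (by rw [hF', SimpleGraph.deleteEdges_adj]; simp)
    have hF'adj : ∀ a b, F'.Adj a b ↔ F.Adj a b ∧ s(a, b) ≠ s(ℓ, p) := by
      intro a b
      rw [hF', SimpleGraph.deleteEdges_adj]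
      simp
    have hF'le : F' ≤ F := SimpleGraph.deleteEdges_le _
    have hac' : F'.IsAcyclic := by
      intro v c hc
      exact hac (c.mapLe hF'le) (hc.mapLe _)
    have hiso' : ∀ w, ¬ F'.Adj ℓ w := by
      intro w hw
      rw [hF'adj] at hw
      have : w ∈ F.neighborFinset ℓ := (SimpleGraph.mem_neighborFinset _ _ _).mpr hw.1
      rw [hnbr, Finset.mem_singleton] at this
      exact hw.2 (by rw [this])
    -- edge sets
    have hEF' : F'.edgeFinset = F.edgeFinset.erase s(ℓ, p) := by
      ext e
      induction e using Sym2.ind with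
      | _ a b =>
        rw [SimpleGraph.mem_edgeFinset, SimpleGraph.mem_edgeSet, hF'adj, Finset.mem_erase,
          SimpleGraph.mem_edgeFinset, SimpleGraph.mem_edgeSet]
        tauto
    have hmemE : s(ℓ, p) ∈ F.edgeFinset := SimpleGraph.mem_edgeFinset.mpr hadj
    have hEF : F.edgeFinset = insert s(ℓ, p) F'.edgeFinset := by
      rw [hEF', Finset.insert_erase hmemE]
    have hnotmem : s(ℓ, p) ∉ F'.edgeFinset := by
      rw [hEF']
      exact Finset.notMem_erase _ _
    have hcard' : F'.edgeFinset.card = n := by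
      rw [hEF', Finset.card_erase_of_mem hmemE, hcard]
      omega
    -- degrees
    have hdegℓ : F.degree ℓ = 1 := by
      rw [← SimpleGraph.card_neighborFinset_eq_degree, hnbr, Finset.card_singleton]
    have hdegℓ' : F'.degree ℓ = 0 := by
      rw [← SimpleGraph.card_neighborFinset_eq_degree]
      refine Finset.card_eq_zero.mpr ?_
      ext w
      simp [SimpleGraph.mem_neighborFinset, hiso' w]
    have hnbrp : F'.neighborFinset p = (F.neighborFinset p).erase ℓ := by
      ext w
      rw [SimpleGraph.mem_neighborFinset, hF'adj, Finset.mem_erase,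
        SimpleGraph.mem_neighborFinset]
      constructor
      · rintro ⟨h1, h2⟩
        refine ⟨fun hwℓ => h2 ?_, h1⟩
        rw [hwℓ]
        rw [Sym2.eq_iff]
        right; exact ⟨rfl, rfl⟩
      · rintro ⟨h1, h2⟩
        refine ⟨h2, fun heq => ?_⟩
        rw [Sym2.eq_iff] at heq
        rcases heq with ⟨ha, hb⟩ | ⟨ha, hb⟩
        · exact hℓp (ha ▸ hb ▸ rfl)
        · exact h1 hb
    have hdegp : F.degree p = F'.degree p + 1 := by
      rw [← SimpleGraph.card_neighborFinset_eq_degree, ← SimpleGraph.card_neighborFinset_eq_degree,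
        hnbrp, Finset.card_erase_of_mem ((SimpleGraph.mem_neighborFinset _ _ _).mpr hadj.symm)]
      have : 0 < (F.neighborFinset p).card :=
        Finset.card_pos.mpr ⟨ℓ, (SimpleGraph.mem_neighborFinset _ _ _).mpr hadj.symm⟩
      omega
    have hdegsame : ∀ i, i ≠ ℓ → i ≠ p → F'.degree i = F.degree i := by
      intro i hiℓ hip
      rw [← SimpleGraph.card_neighborFinset_eq_degree, ← SimpleGraph.card_neighborFinset_eq_degree]
      congr 1
      ext w
      rw [SimpleGraph.mem_neighborFinset, hF'adj, SimpleGraph.mem_neighborFinset]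
      constructor
      · exact fun h => h.1
      · intro h
        refine ⟨h, fun heq => ?_⟩
        rw [Sym2.eq_iff] at heq
        rcases heq with ⟨ha, _⟩ | ⟨ha, _⟩
        · exact hiℓ ha
        · exact hip ha
    -- factorization
    have hfact : ∀ x, treeFactorized F b1 b2 hsym x
        = treeFactorized F' b1 b2 hsym x
          * (b2 ℓ p (x ℓ) (x p) / (b1 ℓ (x ℓ) * b1 p (x p))) := by
      intro x
      unfold treeFactorized
      rw [hEF, Finset.prod_insert hnotmem, Sym2.lift_mk]
      have hpmem : p ∈ Finset.univ.erase ℓ := Finset.mem_erase.mpr ⟨hadj.ne', Finset.mem_univ p⟩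
      rw [← Finset.mul_prod_erase Finset.univ _ (Finset.mem_univ ℓ),
        ← Finset.mul_prod_erase (Finset.univ.erase ℓ) _ hpmem]
      rw [show (∏ i : V, b1 i (x i) ^ ((1 : ℤ) - F'.degree i))
          = b1 ℓ (x ℓ) ^ ((1 : ℤ) - F'.degree ℓ) * (b1 p (x p) ^ ((1 : ℤ) - F'.degree p)
            * ∏ i ∈ (Finset.univ.erase ℓ).erase p, b1 i (x i) ^ ((1 : ℤ) - F'.degree i)) by
        rw [← Finset.mul_prod_erase Finset.univ _ (Finset.mem_univ ℓ),
          ← Finset.mul_prod_erase (Finset.univ.erase ℓ) _ hpmem]]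
      have hR : ∏ i ∈ (Finset.univ.erase ℓ).erase p, b1 i (x i) ^ ((1 : ℤ) - F'.degree i)
          = ∏ i ∈ (Finset.univ.erase ℓ).erase p, b1 i (x i) ^ ((1 : ℤ) - F.degree i) := by
        refine Finset.prod_congr rfl fun i hi => ?_
        obtain ⟨hip, hiℓ'⟩ := Finset.mem_erase.mp hi
        obtain ⟨hiℓ, _⟩ := Finset.mem_erase.mp hiℓ'
        rw [hdegsame i hiℓ hip]
      rw [hR, hdegℓ, hdegℓ', hdegp]
      have hb1ℓne : b1 ℓ (x ℓ) ≠ 0 := ne_of_gt (hb1pos ℓ (x ℓ))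
      have hb1pne : b1 p (x p) ≠ 0 := ne_of_gt (hb1pos p (x p))
      have h1 : b1 ℓ (x ℓ) ^ ((1 : ℤ) - ((1 : ℕ) : ℤ)) = 1 := by norm_num
      have h0 : b1 ℓ (x ℓ) ^ ((1 : ℤ) - ((0 : ℕ) : ℤ)) = b1 ℓ (x ℓ) := by norm_num
      have hp2 : b1 p (x p) ^ ((1 : ℤ) - ((F'.degree p + 1 : ℕ) : ℤ))
          = b1 p (x p) ^ ((1 : ℤ) - (F'.degree p : ℤ)) * (b1 p (x p))⁻¹ := by
        push_cast
        rw [show (1 : ℤ) - ((F'.degree p : ℤ) + 1) = ((1 : ℤ) - (F'.degree p : ℤ)) + (-1) by ring,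
          zpow_add₀ hb1pne, zpow_neg_one]
      rw [h1, h0, hp2]
      set C := b1 p (x p) ^ ((1 : ℤ) - (F'.degree p : ℤ)) with hC
      field_simp
    -- hypotheses transferred to F'
    have hm' : ∀ i j, F'.Adj i j → ∀ s : X i, ∑ t : X j, b2 i j s t = b1 i s :=
      fun i j hij s => hm i j ((hF'adj i j).mp hij).1 s
    obtain ⟨ih1, ih2⟩ := ih F' hac' hcard' hm'
    -- sums of b2 over the removed edge
    have hmargℓ : ∀ u : X ℓ, ∑ v, b2 ℓ p u v = b1 ℓ u := hm ℓ p hadj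
    have hmargp : ∀ v : X p, ∑ u, b2 ℓ p u v = b1 p v := by
      intro v
      rw [Finset.sum_congr rfl fun u _ => hsym ℓ p u v]
      exact hm p ℓ hadj.symm v
    set g₂ : X ℓ → X p → ℝ := fun u v => b2 ℓ p u v / (b1 ℓ u * b1 p v) with hg₂
    have hg₂' : ∀ u v, g₂ u v = b2 ℓ p u v / (b1 ℓ u * b1 p v) := fun u v => rfl
    have hprod : ∀ u v, b1 ℓ u * (b1 p v * g₂ u v) = b2 ℓ p u v := by
      intro u v
      rw [hg₂' u v]
      have h1 : b1 ℓ u ≠ 0 := ne_of_gt (hb1pos ℓ u)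
      have h2 : b1 p v ≠ 0 := ne_of_gt (hb1pos p v)
      field_simp
    have hone : ∀ v, ∑ u, b1 ℓ u * g₂ u v = 1 := by
      intro v
      have h2 : b1 p v ≠ 0 := ne_of_gt (hb1pos p v)
      have : ∀ u, b1 ℓ u * g₂ u v = b2 ℓ p u v / b1 p v := by
        intro u
        have h1 : b1 ℓ u ≠ 0 := ne_of_gt (hb1pos ℓ u)
        rw [hg₂' u v]
        field_simp
      rw [Finset.sum_congr rfl fun u _ => this u, ← Finset.sum_div, hmargp v, div_self h2]
    -- helper to rewrite the global sum
    have hsum_fact : ∀ Φ : ((i : V) → X i) → ℝ,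
        ∑ x, treeFactorized F b1 b2 hsym x * Φ x
          = ∑ x, treeFactorized F' b1 b2 hsym x * (g₂ (x ℓ) (x p) * Φ x) := by
      intro Φ
      refine Finset.sum_congr rfl fun x _ => ?_
      rw [hfact x, hg₂' (x ℓ) (x p)]
      ring
    constructor
    · -- single-site marginals
      intro i w
      by_cases hiℓ : i = ℓ
      · subst hiℓ
        rw [hsum_fact]
        have key := (tfAux_key b1 b2 hsym F' i hiso' (hb1sum i)
          (fun u x => g₂ u (x p) * w u)
          (fun v x u => by simp only [Function.update_of_ne (Ne.symm hℓp)])).1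
        rw [key]
        have inner : ∀ u, ∑ x, treeFactorized F' b1 b2 hsym x * (g₂ u (x p) * w u)
            = ∑ v, b1 p v * (g₂ u v * w u) := fun u => ih1 p (fun v => g₂ u v * w u)
        rw [Finset.sum_congr rfl fun u _ => by rw [inner u]]
        have : ∀ u, b1 i u * ∑ v, b1 p v * (g₂ u v * w u)
            = (∑ v, b2 i p u v) * w u := by
          intro u
          rw [Finset.mul_sum, Finset.sum_mul]
          refine Finset.sum_congr rfl fun v _ => ?_
          rw [← hprod u v]
          ring
        rw [Finset.sum_congr rfl fun u _ => this u]
        refine Finset.sum_congr rfl fun u _ => ?_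
        rw [hmargℓ u]
      · by_cases hip : i = p
        · subst hip
          rw [hsum_fact]
          have key := (tfAux_key b1 b2 hsym F' ℓ hiso' (hb1sum ℓ)
            (fun u x => g₂ u (x i) * w (x i))
            (fun v x u => by simp only [Function.update_of_ne (Ne.symm hℓp)])).1
          rw [key]
          have inner : ∀ u, ∑ x, treeFactorized F' b1 b2 hsym x * (g₂ u (x i) * w (x i))
              = ∑ v, b1 i v * (g₂ u v * w v) := fun u => ih1 i (fun v => g₂ u v * w v)
          rw [Finset.sum_congr rfl fun u _ => by rw [inner u]]
          rw [show (∑ u, b1 ℓ u * ∑ v, b1 i v * (g₂ u v * w v))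
              = ∑ u, ∑ v, b2 ℓ i u v * w v by
            refine Finset.sum_congr rfl fun u _ => ?_
            rw [Finset.mul_sum]
            refine Finset.sum_congr rfl fun v _ => ?_
            rw [← hprod u v]
            ring]
          rw [Finset.sum_comm]
          refine Finset.sum_congr rfl fun v _ => ?_
          rw [← Finset.sum_mul, hmargp v]
        · -- i is neither ℓ nor p
          rw [hsum_fact]
          have key := (tfAux_key b1 b2 hsym F' ℓ hiso' (hb1sum ℓ)
            (fun u x => g₂ u (x p) * w (x i))
            (fun v x u => by
              simp only [Function.update_of_ne (Ne.symm hℓp),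
                Function.update_of_ne hiℓ])).2
          rw [key]
          have : ∀ x : (i : V) → X i,
              treeFactorized F' b1 b2 hsym x * ∑ u, b1 ℓ u * (g₂ u (x p) * w (x i))
                = treeFactorized F' b1 b2 hsym x * w (x i) := by
            intro x
            have : ∑ u, b1 ℓ u * (g₂ u (x p) * w (x i))
                = (∑ u, b1 ℓ u * g₂ u (x p)) * w (x i) := by
              rw [Finset.sum_mul]
              exact Finset.sum_congr rfl fun u _ => by ring
            rw [this, hone (x p), one_mul]
          rw [Finset.sum_congr rfl fun x _ => this x]
          exact ih1 i w
    · -- pairwise marginals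
      intro i j hij w
      by_cases hedge : s(i, j) = s(ℓ, p)
      · rw [Sym2.eq_iff] at hedge
        rcases hedge with ⟨hiℓ, hjp⟩ | ⟨hip, hjℓ⟩
        · subst hiℓ; subst hjp
          rw [hsum_fact]
          have key := (tfAux_key b1 b2 hsym F' i hiso' (hb1sum i)
            (fun u x => g₂ u (x j) * w u (x j))
            (fun v x u => by simp only [Function.update_of_ne (Ne.symm hℓp)])).1
          rw [key]
          have inner : ∀ u, ∑ x, treeFactorized F' b1 b2 hsym x * (g₂ u (x j) * w u (x j))
              = ∑ v, b1 j v * (g₂ u v * w u v) := fun u => ih1 j (fun v => g₂ u v * w u v)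
          rw [Finset.sum_congr rfl fun u _ => by rw [inner u]]
          refine Finset.sum_congr rfl fun u _ => ?_
          rw [Finset.mul_sum]
          refine Finset.sum_congr rfl fun v _ => ?_
          rw [← hprod u v]
          ring
        · subst hip; subst hjℓ
          rw [hsum_fact]
          have key := (tfAux_key b1 b2 hsym F' j hiso' (hb1sum j)
            (fun u x => g₂ u (x i) * w (x i) u)
            (fun v x u => by simp only [Function.update_of_ne (Ne.symm hℓp)])).1
          rw [key]
          have inner : ∀ u, ∑ x, treeFactorized F' b1 b2 hsym x * (g₂ u (x i) * w (x i) u)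
              = ∑ v, b1 i v * (g₂ u v * w v u) := fun u => ih1 i (fun v => g₂ u v * w v u)
          rw [Finset.sum_congr rfl fun u _ => by rw [inner u]]
          rw [show ∑ u, b1 j u * ∑ v, b1 i v * (g₂ u v * w v u)
              = ∑ u, ∑ v, b2 j i u v * w v u by
            refine Finset.sum_congr rfl fun u _ => ?_
            rw [Finset.mul_sum]
            refine Finset.sum_congr rfl fun v _ => ?_
            rw [← hprod u v]
            ring]
          rw [Finset.sum_comm]
          refine Finset.sum_congr rfl fun v _ => Finset.sum_congr rfl fun u _ => ?_
          rw [hsym i j v u]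
      · -- the edge survives in F'
        have hij' : F'.Adj i j := (hF'adj i j).mpr ⟨hij, hedge⟩
        have hiℓ : i ≠ ℓ := by
          intro h
          subst h
          have : j ∈ F.neighborFinset i := (SimpleGraph.mem_neighborFinset _ _ _).mpr hij
          rw [hnbr, Finset.mem_singleton] at this
          exact hedge (by rw [this])
        have hjℓ : j ≠ ℓ := by
          intro h
          subst h
          have : i ∈ F.neighborFinset j := (SimpleGraph.mem_neighborFinset _ _ _).mpr hij.symm
          rw [hnbr, Finset.mem_singleton] at this
          refine hedge ?_
          rw [this]
          rw [Sym2.eq_iff]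
          right; exact ⟨rfl, rfl⟩
        rw [hsum_fact]
        have key := (tfAux_key b1 b2 hsym F' ℓ hiso' (hb1sum ℓ)
          (fun u x => g₂ u (x p) * w (x i) (x j))
          (fun v x u => by
            simp only [Function.update_of_ne (Ne.symm hℓp),
              Function.update_of_ne hiℓ, Function.update_of_ne hjℓ])).2
        rw [key]
        have : ∀ x : (i : V) → X i,
            treeFactorized F' b1 b2 hsym x * ∑ u, b1 ℓ u * (g₂ u (x p) * w (x i) (x j))
              = treeFactorized F' b1 b2 hsym x * w (x i) (x j) := by
          intro x
          have : ∑ u, b1 ℓ u * (g₂ u (x p) * w (x i) (x j))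
              = (∑ u, b1 ℓ u * g₂ u (x p)) * w (x i) (x j) := by
            rw [Finset.sum_mul]
            exact Finset.sum_congr rfl fun u _ => by ring
          rw [this, hone (x p), one_mul]
        rw [Finset.sum_congr rfl fun x _ => this x]
        exact ih2 i j hij' w

end Aux

/-- **Tree-factorized distribution of a consistent belief system.**
Given a consistent belief system on a tree `T` (strictly positive normalized
node beliefs `b1`, strictly positive normalized symmetric pairwise beliefs
`b2` on the edges, consistent with the node beliefs), the tree-factorized
distribution `b(x) = (Π_{{i,j}∈E(T)} b_{ij}(x_i,x_j)) · Π_i b_i(x_i)^{1-deg i}`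
is a strictly positive probability mass function whose single-variable
marginals are the node beliefs and whose pairwise marginals on the edges are
the edge beliefs. -/
theorem treeFactorized_marginals (V : Type*) [Fintype V] [DecidableEq V] [Nonempty V]
    (X : V → Type*) [∀ i, Fintype (X i)] [∀ i, Nonempty (X i)] [∀ i, DecidableEq (X i)]
    (T : SimpleGraph V) [DecidableRel T.Adj] (hT : T.IsTree)
    (b1 : (i : V) → X i → ℝ) (b2 : (i j : V) → X i → X j → ℝ)
    (hb1pos : ∀ i s, 0 < b1 i s) (hb1sum : ∀ i, ∑ s, b1 i s = 1)
    (hsym : ∀ i j s t, b2 i j s t = b2 j i t s)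
    (hb2pos : ∀ i j, T.Adj i j → ∀ s t, 0 < b2 i j s t)
    (hb2sum : ∀ i j, T.Adj i j → ∑ s : X i, ∑ t : X j, b2 i j s t = 1)
    (hmarg : ∀ i j, T.Adj i j → ∀ s : X i, ∑ t : X j, b2 i j s t = b1 i s) :
    (∀ x, 0 < treeFactorized T b1 b2 hsym x) ∧
      (∑ x : (i : V) → X i, treeFactorized T b1 b2 hsym x = 1) ∧
      (∀ i : V, ∀ s : X i,
        ∑ x ∈ Finset.univ.filter (fun x : (i : V) → X i => x i = s),
          treeFactorized T b1 b2 hsym x = b1 i s) ∧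
      (∀ i j : V, T.Adj i j → ∀ (s : X i) (t : X j),
        ∑ x ∈ Finset.univ.filter (fun x : (i : V) → X i => x i = s ∧ x j = t),
          treeFactorized T b1 b2 hsym x = b2 i j s t) := by
  classical
  obtain ⟨hmain1, hmain2⟩ := tfAux_main b1 b2 hsym hb1pos hb1sum T.edgeFinset.card T
    hT.2 rfl hmarg
  have hpos : ∀ x, 0 < treeFactorized T b1 b2 hsym x := by
    intro x
    unfold treeFactorized
    refine mul_pos (Finset.prod_pos ?_) (Finset.prod_pos fun i _ => zpow_pos (hb1pos i (x i)) _)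
    intro e he
    revert he
    induction e using Sym2.ind with
    | _ a b =>
      intro he
      rw [Sym2.lift_mk]
      exact hb2pos a b (SimpleGraph.mem_edgeFinset.mp he) (x a) (x b)
  refine ⟨hpos, ?_, ?_, ?_⟩
  · -- total mass one
    have i₀ : V := Classical.arbitrary V
    have := hmain1 i₀ (fun _ => 1)
    simpa [hb1sum i₀] using this
  · -- single-site marginals
    intro i s
    rw [Finset.sum_filter]
    have h1 : ∀ x : (i : V) → X i, (if x i = s then treeFactorized T b1 b2 hsym x else 0)
        = treeFactorized T b1 b2 hsym x * (if x i = s then 1 else 0) := by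
      intro x
      by_cases h : x i = s <;> simp [h]
    rw [Finset.sum_congr rfl fun x _ => h1 x, hmain1 i (fun u => if u = s then 1 else 0)]
    simp
  · -- pairwise marginals
    intro i j hij s t
    rw [Finset.sum_filter]
    have h1 : ∀ x : (i : V) → X i,
        (if x i = s ∧ x j = t then treeFactorized T b1 b2 hsym x else 0)
        = treeFactorized T b1 b2 hsym x
          * (if x i = s then (if x j = t then 1 else 0) else 0) := by
      intro x
      by_cases h : x i = s <;> by_cases h' : x j = t <;> simp [h, h']
    rw [Finset.sum_congr rfl fun x _ => h1 x,
      hmain2 i j hij (fun u v => if u = s then (if v = t then 1 else 0) else 0)]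
    simp
end

section
/- Let p(x) = p̃(x)/Z be the pairwise Markov random field on the tree T, where p̃(x) = ∏_{{i,j}∈E(T)} ψ_{ij}(x_i, x_j) and Z = Σ_x p̃(x), and let p_i and p_{ij} denote its single-variable and edge pairwise marginals. Then p factorizes in terms of its marginals according to the tree: p(x) = ( ∏_{{i,j}∈E(T)} p_{ij}(x_i, x_j) ) · ∏_{i∈V} p_i(x_i)^{1 - deg(i)} for every x. -/
set_option linter.unusedSectionVars false
set_option linter.unusedVariables false
set_option maxHeartbeats 1600000


open Finset

variable {V : Type*} [Fintype V] [DecidableEq V]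
  {X : V → Type*} [∀ i, Fintype (X i)] [∀ i, DecidableEq (X i)]

/-- The single-variable marginal `p_i(s) = Σ_{x : x_i = s} p(x)`. -/
noncomputable def marg1 (p : ((i : V) → X i) → ℝ) (i : V) (s : X i) : ℝ :=
  ∑ x ∈ Finset.univ.filter (fun x : (i : V) → X i => x i = s), p x

/-- The pairwise marginal `p_{ij}(s,t) = Σ_{x : x_i = s, x_j = t} p(x)`. -/
noncomputable def marg2 (p : ((i : V) → X i) → ℝ) (i j : V) (s : X i) (t : X j) : ℝ :=
  ∑ x ∈ Finset.univ.filter (fun x : (i : V) → X i => x i = s ∧ x j = t), p x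

theorem marg2_symm (p : ((i : V) → X i) → ℝ) (i j : V) (s : X i) (t : X j) :
    marg2 p i j s t = marg2 p j i t s := by
  unfold marg2
  exact Finset.sum_congr (by ext x; simp [and_comm]) fun _ _ => rfl


section TreeMRFAux
open SimpleGraph


namespace TreeMRF

variable {V : Type*} [Fintype V] [DecidableEq V]

/-- A finite tree with more than one vertex has a leaf. -/
lemma exists_leaf (T : SimpleGraph V) [DecidableRel T.Adj] (hT : T.IsTree)
    (hcard : 1 < Fintype.card V) : ∃ ℓ : V, T.degree ℓ = 1 := by
  by_contra h
  push_neg at h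
  have hpos : ∀ i : V, 0 < T.degree i := by
    intro i
    rw [T.degree_pos_iff_exists_adj]
    obtain ⟨j, hj⟩ := Fintype.exists_ne_of_one_lt_card hcard i
    obtain ⟨p⟩ := hT.isConnected.preconnected i j
    cases p with
    | nil => exact absurd rfl hj
    | cons hadj q => exact ⟨_, hadj⟩
  have h2 : ∀ i : V, 2 ≤ T.degree i := by
    intro i
    have := hpos i
    have := h i
    omega
  have hsum := T.sum_degrees_eq_twice_card_edges
  have hE : T.edgeFinset.card + 1 = Fintype.card V := hT.card_edgeFinset
  have : 2 * Fintype.card V ≤ ∑ v : V, T.degree v := by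
    calc 2 * Fintype.card V = ∑ _v : V, 2 := by simp [mul_comm]
    _ ≤ ∑ v : V, T.degree v := Finset.sum_le_sum fun v _ => h2 v
  omega

/-- If `ℓ` has degree one, it has a unique neighbor. -/
lemma exists_unique_nbr (T : SimpleGraph V) [DecidableRel T.Adj] {ℓ : V}
    (hdeg : T.degree ℓ = 1) : ∃ u : V, T.Adj ℓ u ∧ ∀ w, T.Adj ℓ w → w = u := by
  obtain ⟨u, hu⟩ := Finset.card_eq_one.mp hdeg
  refine ⟨u, ?_, ?_⟩
  · have : u ∈ T.neighborFinset ℓ := hu ▸ Finset.mem_singleton_self u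
    exact (T.mem_neighborFinset ℓ u).mp this
  · intro w hw
    have : w ∈ T.neighborFinset ℓ := (T.mem_neighborFinset ℓ w).mpr hw
    rw [hu, Finset.mem_singleton] at this
    exact this

/-- A path between non-`ℓ` vertices avoids a degree-one vertex `ℓ`. -/
lemma path_avoids_leaf (T : SimpleGraph V) [DecidableRel T.Adj] {ℓ : V}
    (hdeg : T.degree ℓ = 1) {v w : V} (p : T.Walk v w) (hp : p.IsPath)
    (hv : v ≠ ℓ) (hw : w ≠ ℓ) : ∀ c ∈ p.support, c ≠ ℓ := by
  obtain ⟨u, hu, huniq⟩ := exists_unique_nbr T hdeg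
  intro c hc hcℓ
  subst hcℓ
  have hsupp : c ∈ p.support := hc
  set q1 := p.takeUntil c hsupp with hq1def
  set q2 := p.dropUntil c hsupp with hq2def
  have hspec : q1.append q2 = p := p.take_spec hsupp
  have hq1 : q1.IsPath := hp.takeUntil hsupp
  have hq2 : q2.IsPath := hp.dropUntil hsupp
  -- q2 = cons to u
  have hu1 : u ∈ q1.support := by
    obtain ⟨a, hadj, r, hr⟩ := Walk.exists_eq_cons_of_ne (Ne.symm hv) q1.reverse
    have ha : a = u := huniq a hadj
    have : a ∈ q1.reverse.support := by
      rw [hr]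
      simp [Walk.support_cons]
    rw [Walk.support_reverse, List.mem_reverse] at this
    exact ha ▸ this
  have hu2 : u ∈ q2.support.tail := by
    cases q2 with
    | nil => exact absurd rfl hw
    | cons hadj r =>
      have hb := huniq _ hadj
      subst hb
      simpa [Walk.support_cons] using r.start_mem_support
  have hnodup := hp.support_nodup
  rw [← hspec, Walk.support_append] at hnodup
  rw [List.nodup_append] at hnodup
  exact hnodup.2.2 u hu1 u hu2 rfl



variable {V : Type*} [Fintype V] [DecidableEq V]

section Deletion

variable (T : SimpleGraph V) [DecidableRel T.Adj] (ℓ : V)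

/-- The graph obtained by deleting the vertex `ℓ`. -/
def del : SimpleGraph {j : V // j ≠ ℓ} := T.comap (Subtype.val)

instance : DecidableRel (del T ℓ).Adj := fun a b =>
  (inferInstance : Decidable (T.Adj a.1 b.1))

lemma del_adj {a b : {j : V // j ≠ ℓ}} : (del T ℓ).Adj a b ↔ T.Adj a.1 b.1 := Iff.rfl

lemma reachable_del {a b : V} (p : T.Walk a b) (h : ∀ c ∈ p.support, c ≠ ℓ) :
    ∀ (ha : a ≠ ℓ) (hb : b ≠ ℓ), (del T ℓ).Reachable ⟨a, ha⟩ ⟨b, hb⟩ := by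
  induction p with
  | nil => intro ha hb; exact Reachable.refl _
  | @cons a c b hadj q ih =>
    intro ha hb
    have hc : c ≠ ℓ := h c (by simp [Walk.support_cons])
    have h1 : (del T ℓ).Adj ⟨a, ha⟩ ⟨c, hc⟩ := hadj
    exact h1.reachable.trans (ih (fun d hd => h d (by simp [Walk.support_cons, hd])) hc hb)

/-- Deleting a leaf from a tree yields a tree. -/
lemma del_isTree (hT : T.IsTree) (hdeg : T.degree ℓ = 1) : (del T ℓ).IsTree := by
  obtain ⟨u, hu, -⟩ := exists_unique_nbr T hdeg
  haveI : Nonempty {j : V // j ≠ ℓ} := ⟨⟨u, fun h => T.irrefl (h ▸ hu)⟩⟩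
  constructor
  · constructor
    intro a b
    obtain ⟨p⟩ := hT.isConnected.preconnected a.1 b.1
    have hp := p.bypass_isPath
    have havoid := path_avoids_leaf T hdeg p.bypass hp a.2 b.2
    have := reachable_del T ℓ p.bypass havoid a.2 b.2
    simpa using this
  · intro v c hc
    have := hc.map (f := SimpleGraph.Embedding.comap
      (Function.Embedding.subtype (· ≠ ℓ)) T |>.toHom)
      (Subtype.val_injective)
    exact hT.IsAcyclic _ this

variable {T} {u : V}

lemma del_degree_ne (huniq : ∀ w, T.Adj ℓ w → w = u) (i : {j : V // j ≠ ℓ})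
    (hiu : i.1 ≠ u) : (del T ℓ).degree i = T.degree i.1 := by
  unfold SimpleGraph.degree
  apply Finset.card_bij (fun a _ => a.1)
  · intro a ha
    rw [mem_neighborFinset] at ha ⊢
    exact ha
  · intro a _ b _ hab
    exact Subtype.ext hab
  · intro b hb
    rw [mem_neighborFinset] at hb
    have hbℓ : b ≠ ℓ := by
      rintro rfl
      exact hiu (huniq i.1 hb.symm)
    exact ⟨⟨b, hbℓ⟩, by rw [mem_neighborFinset]; exact hb, rfl⟩

lemma del_degree_u (hℓu : ℓ ≠ u) (hu : T.Adj ℓ u) :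
    (del T ℓ).degree ⟨u, Ne.symm hℓu⟩ + 1 = T.degree u := by
  unfold SimpleGraph.degree
  have hℓmem : ℓ ∈ T.neighborFinset u := by
    rw [mem_neighborFinset]; exact hu.symm
  rw [← Finset.card_erase_add_one hℓmem]
  congr 1
  apply Finset.card_bij (fun a _ => a.1)
  · intro a ha
    rw [mem_neighborFinset] at ha
    rw [Finset.mem_erase, mem_neighborFinset]
    exact ⟨a.2, ha⟩
  · intro a _ b _ hab
    exact Subtype.ext hab
  · intro b hb
    rw [Finset.mem_erase, mem_neighborFinset] at hb
    exact ⟨⟨b, hb.1⟩, by rw [mem_neighborFinset]; exact hb.2, rfl⟩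

/-- Splitting off the edge `s(u,ℓ)` from a product over the edges of `T`. -/
lemma prod_edges_split {M : Type*} [CommMonoid M] (hℓu : ℓ ≠ u) (hu : T.Adj ℓ u)
    (huniq : ∀ w, T.Adj ℓ w → w = u) (F : Sym2 V → M) :
    ∏ e ∈ T.edgeFinset, F e
      = F s(u, ℓ) * ∏ e ∈ (del T ℓ).edgeFinset, F (Sym2.map Subtype.val e) := by
  have hmem : s(u, ℓ) ∈ T.edgeFinset := by
    rw [mem_edgeFinset, mem_edgeSet]
    exact hu.symm
  rw [← Finset.mul_prod_erase _ _ hmem]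
  congr 1
  apply (Finset.prod_bij (fun (e : Sym2 {j : V // j ≠ ℓ}) (_ : e ∈ (del T ℓ).edgeFinset)
    => Sym2.map Subtype.val e) ?_ ?_ ?_ ?_).symm
  · intro e he
    induction e with
    | _ a b =>
      rw [mem_edgeFinset, mem_edgeSet] at he
      rw [Finset.mem_erase, Sym2.map_pair_eq, mem_edgeFinset, mem_edgeSet]
      refine ⟨?_, he⟩
      intro hcon
      have : ℓ ∈ s(u, ℓ) := by simp
      rw [← hcon] at this
      rcases Sym2.mem_iff.mp this with h | h
      · exact a.2 h.symm
      · exact b.2 h.symm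
  · intro e1 h1 e2 h2 heq
    exact Sym2.map.injective Subtype.val_injective heq
  · intro e he
    rw [Finset.mem_erase, mem_edgeFinset] at he
    revert he
    induction e with
    | _ a b =>
      intro he
      rw [mem_edgeSet] at he
      have haℓ : a ≠ ℓ := by
        rintro rfl
        have hbu : b = u := huniq b he.2
        exact he.1 (by rw [hbu, Sym2.eq_swap])
      have hbℓ : b ≠ ℓ := by
        rintro rfl
        have hau : a = u := huniq a he.2.symm
        exact he.1 (by rw [hau])
      refine ⟨s(⟨a, haℓ⟩, ⟨b, hbℓ⟩), ?_, ?_⟩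
      · rw [mem_edgeFinset, mem_edgeSet]
        exact he.2
      · show Sym2.map Subtype.val s(⟨a, haℓ⟩, ⟨b, hbℓ⟩) = s(a, b)
        rw [Sym2.map_pair_eq]
  · intro e he
    rfl

end Deletion



section Algebra

universe u v

variable {V : Type u} [Fintype V] [DecidableEq V]
  {X : V → Type v} [∀ i, Fintype (X i)] [∀ i, DecidableEq (X i)]

/-- The unnormalized MRF weight with edge potentials `ψ2` and vertex potentials `φ`. -/
noncomputable def PT (T : SimpleGraph V) [DecidableRel T.Adj]
    (ψ2 : (i j : V) → X i → X j → ℝ) (hψsym : ∀ i j s t, ψ2 i j s t = ψ2 j i t s)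
    (φ : (i : V) → X i → ℝ) (x : (i : V) → X i) : ℝ :=
  (∏ e ∈ T.edgeFinset,
    Sym2.lift ⟨fun i j => ψ2 i j (x i) (x j), fun i j => hψsym i j (x i) (x j)⟩ e)
    * ∏ i, φ i (x i)

/-- Unnormalized single-site marginal. -/
noncomputable def Q1 (T : SimpleGraph V) [DecidableRel T.Adj]
    (ψ2 : (i j : V) → X i → X j → ℝ) (hψsym : ∀ i j s t, ψ2 i j s t = ψ2 j i t s)
    (φ : (i : V) → X i → ℝ) (i : V) (s : X i) : ℝ :=
  ∑ x : (j : V) → X j, if x i = s then PT T ψ2 hψsym φ x else 0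

/-- Unnormalized pairwise marginal. -/
noncomputable def Q2 (T : SimpleGraph V) [DecidableRel T.Adj]
    (ψ2 : (i j : V) → X i → X j → ℝ) (hψsym : ∀ i j s t, ψ2 i j s t = ψ2 j i t s)
    (φ : (i : V) → X i → ℝ) (i j : V) (s : X i) (t : X j) : ℝ :=
  ∑ x : (j : V) → X j, if x i = s ∧ x j = t then PT T ψ2 hψsym φ x else 0

lemma Q2_symm (T : SimpleGraph V) [DecidableRel T.Adj]
    (ψ2 : (i j : V) → X i → X j → ℝ) (hψsym : ∀ i j s t, ψ2 i j s t = ψ2 j i t s)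
    (φ : (i : V) → X i → ℝ) (i j : V) (s : X i) (t : X j) :
    Q2 T ψ2 hψsym φ i j s t = Q2 T ψ2 hψsym φ j i t s :=
  Finset.sum_congr rfl fun _ _ => if_congr and_comm rfl rfl

lemma PT_pos (T : SimpleGraph V) [DecidableRel T.Adj]
    (ψ2 : (i j : V) → X i → X j → ℝ) (hψsym : ∀ i j s t, ψ2 i j s t = ψ2 j i t s)
    (hψpos : ∀ i j, T.Adj i j → ∀ s t, 0 < ψ2 i j s t)
    (φ : (i : V) → X i → ℝ) (hφ : ∀ i s, 0 < φ i s) (x : (i : V) → X i) :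
    0 < PT T ψ2 hψsym φ x := by
  apply mul_pos
  · apply Finset.prod_pos
    intro e he
    revert he
    induction e with
    | _ a b =>
      intro he
      rw [mem_edgeFinset, mem_edgeSet] at he
      rw [Sym2.lift_mk]
      exact hψpos a b he _ _
  · exact Finset.prod_pos fun i _ => hφ i (x i)

lemma Q1_pos [∀ i, Nonempty (X i)] (T : SimpleGraph V) [DecidableRel T.Adj]
    (ψ2 : (i j : V) → X i → X j → ℝ) (hψsym : ∀ i j s t, ψ2 i j s t = ψ2 j i t s)
    (hψpos : ∀ i j, T.Adj i j → ∀ s t, 0 < ψ2 i j s t)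
    (φ : (i : V) → X i → ℝ) (hφ : ∀ i s, 0 < φ i s) (i : V) (s : X i) :
    0 < Q1 T ψ2 hψsym φ i s := by
  haveI : Nonempty ((j : V) → X j) := ⟨fun j => Classical.arbitrary _⟩
  apply Finset.sum_pos'
  · intro x _
    split_ifs with h
    · exact (PT_pos T ψ2 hψsym hψpos φ hφ x).le
    · exact le_refl 0
  · refine ⟨Function.update (Classical.arbitrary _) i s, Finset.mem_univ _, ?_⟩
    rw [if_pos (Function.update_self i s _)]
    exact PT_pos T ψ2 hψsym hψpos φ hφ _

/-- Reinsertion of a value at coordinate `ℓ`. -/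
noncomputable def ins (ℓ : V) (t : X ℓ) (y : (j : {j : V // j ≠ ℓ}) → X j.1) :
    (j : V) → X j :=
  (Equiv.piSplitAt ℓ X).symm (t, y)

lemma ins_self (ℓ : V) (t : X ℓ) (y : (j : {j : V // j ≠ ℓ}) → X j.1) :
    ins ℓ t y ℓ = t := by
  simp [ins, Equiv.piSplitAt]

lemma ins_ne (ℓ : V) (t : X ℓ) (y : (j : {j : V // j ≠ ℓ}) → X j.1)
    {j : V} (h : j ≠ ℓ) : ins ℓ t y j = y ⟨j, h⟩ := by
  simp [ins, Equiv.piSplitAt, dif_neg h]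

lemma ins_eta (ℓ : V) (x : (j : V) → X j) :
    ins ℓ (x ℓ) (fun j => x j.1) = x :=
  (Equiv.piSplitAt ℓ X).left_inv x

lemma sum_split (ℓ : V) (g : ((j : V) → X j) → ℝ) :
    ∑ x : (j : V) → X j, g x
      = ∑ t : X ℓ, ∑ y : (j : {j : V // j ≠ ℓ}) → X j.1, g (ins ℓ t y) := by
  rw [← Equiv.sum_comp (Equiv.piSplitAt ℓ X).symm g, Fintype.sum_prod_type]
  rfl

lemma prod_vertex_split {M : Type*} [CommMonoid M] (ℓ : V) (g : V → M) :
    ∏ i, g i = g ℓ * ∏ j : {j : V // j ≠ ℓ}, g j.1 := by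
  rw [← Finset.mul_prod_erase Finset.univ g (Finset.mem_univ ℓ)]
  congr 1
  rw [Finset.prod_subtype (Finset.univ.erase ℓ)
    (p := fun j => j ≠ ℓ) (fun x => by simp) g]

lemma sum_ite_const {α : Type*} [Fintype α] (c : Prop) [Decidable c] (g : α → ℝ) :
    (∑ t : α, if c then g t else 0) = if c then ∑ t : α, g t else 0 := by
  split_ifs <;> simp

lemma prod_zpow_sum {α : Type*} (s : Finset α) {b : ℝ} (hb : b ≠ 0) (f : α → ℤ) :
    ∏ a ∈ s, b ^ f a = b ^ (∑ a ∈ s, f a) := by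
  classical
  induction s using Finset.cons_induction with
  | empty => simp
  | cons a s ha ih => rw [Finset.prod_cons, Finset.sum_cons, ih, zpow_add₀ hb]

lemma lift_comp_map {α β : Type*} (g : α → β) (f : β → β → ℝ) (hf : ∀ a b, f a b = f b a)
    (e : Sym2 α) :
    Sym2.lift ⟨f, hf⟩ (Sym2.map g e)
      = Sym2.lift ⟨fun a b => f (g a) (g b), fun a b => hf _ _⟩ e := by
  induction e with
  | _ a b => rw [Sym2.map_pair_eq, Sym2.lift_mk, Sym2.lift_mk]

end Algebra




universe u v

/-- Core identity: for a tree MRF with edge and vertex potentials,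
`p̃(x) · Π_i q_i(x_i)^{deg(i)-1} = Π_{{i,j}∈E} q_{ij}(x_i,x_j)` (unnormalized). -/
theorem core : ∀ (n : ℕ) (V : Type u) [Fintype V] [DecidableEq V]
    (X : V → Type v) [∀ i, Fintype (X i)] [∀ i, Nonempty (X i)] [∀ i, DecidableEq (X i)],
    Fintype.card V ≤ n →
    ∀ (T : SimpleGraph V) [DecidableRel T.Adj], T.IsTree →
    ∀ (ψ2 : (i j : V) → X i → X j → ℝ)
      (hψsym : ∀ i j s t, ψ2 i j s t = ψ2 j i t s),
      (∀ i j, T.Adj i j → ∀ s t, 0 < ψ2 i j s t) →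
    ∀ (φ : (i : V) → X i → ℝ), (∀ i s, 0 < φ i s) →
    ∀ x : (i : V) → X i,
      PT T ψ2 hψsym φ x * ∏ i, Q1 T ψ2 hψsym φ i (x i) ^ ((T.degree i : ℤ) - 1)
        = ∏ e ∈ T.edgeFinset,
            Sym2.lift ⟨fun i j => Q2 T ψ2 hψsym φ i j (x i) (x j),
              fun i j => Q2_symm T ψ2 hψsym φ i j (x i) (x j)⟩ e := by
  intro n
  induction n with
  | zero =>
    intro V _ _ X _ _ _ hcard T _ hT
    exfalso
    haveI := hT.isConnected.nonempty
    have := Fintype.card_pos (α := V)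
    omega
  | succ n ih =>
    intro V instVF instVD X instXF instXN instXD hcard T instTD hT ψ2 hψsym hψpos φ hφ x
    haveI := hT.isConnected.nonempty
    have hVpos := Fintype.card_pos (α := V)
    by_cases hV1 : Fintype.card V = 1
    · -- base case: a single vertex, no edges
      obtain ⟨a, ha⟩ := Fintype.card_eq_one_iff.mp hV1
      haveI : Unique V := ⟨⟨a⟩, fun b => ha b⟩
      haveI : Subsingleton V := inferInstance
      have hadj : ∀ i j : V, ¬ T.Adj i j := fun i j h => h.ne (Subsingleton.elim i j)
      have hE : T.edgeFinset = ∅ := by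
        rw [Finset.eq_empty_iff_forall_notMem]
        intro e he
        revert he
        induction e with
        | _ i j =>
          intro he
          rw [mem_edgeFinset, mem_edgeSet] at he
          exact hadj i j he
      have hdeg : ∀ i : V, T.degree i = 0 := by
        intro i
        by_contra h
        have : 0 < T.degree i := Nat.pos_of_ne_zero h
        rw [degree_pos_iff_exists_adj] at this
        obtain ⟨w, hw⟩ := this
        exact hadj i w hw
      haveI : IsEmpty {j : V // j ≠ (default : V)} :=
        ⟨fun j => j.2 (Subsingleton.elim _ _)⟩
      have hPT : ∀ z : (i : V) → X i, PT T ψ2 hψsym φ z = φ default (z default) := by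
        intro z
        unfold PT
        rw [hE, Finset.prod_empty, one_mul]
        exact Fintype.prod_unique _
      have hQ1 : ∀ s : X (default : V),
          Q1 T ψ2 hψsym φ default s = φ default s := by
        intro s
        unfold Q1
        rw [sum_split (default : V)]
        have : ∀ t : X (default : V),
            (∑ y : (j : {j : V // j ≠ (default : V)}) → X j.1,
              if ins default t y default = s then PT T ψ2 hψsym φ (ins default t y) else 0)
            = if t = s then φ default t else 0 := by
          intro t
          rw [Fintype.sum_unique]
          rw [hPT, ins_self]
        rw [Finset.sum_congr rfl fun t _ => this t]
        rw [Finset.sum_ite_eq' Finset.univ s (fun t => φ default t)]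
        simp
      have hx : ∀ i : V, i = default := fun i => Subsingleton.elim _ _
      rw [hE, Finset.prod_empty, hPT]
      have : ∀ i : V, Q1 T ψ2 hψsym φ i (x i) ^ ((T.degree i : ℤ) - 1)
          = (φ default (x default))⁻¹ := by
        intro i
        have hi := hx i
        subst hi
        rw [hQ1, hdeg]
        norm_num
      rw [Finset.prod_congr rfl fun i _ => this i, Fintype.prod_unique]
      exact mul_inv_cancel₀ (ne_of_gt (hφ default (x default)))
    · -- inductive step: delete a leaf ℓ with unique neighbor u
      have hV2 : 1 < Fintype.card V := by omega
      obtain ⟨ℓ, hdegℓ⟩ := exists_leaf T hT hV2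
      obtain ⟨u, huadj, huniq⟩ := exists_unique_nbr T hdegℓ
      have hℓu : ℓ ≠ u := huadj.ne
      set u' : {j : V // j ≠ ℓ} := ⟨u, Ne.symm hℓu⟩ with hu'def
      have hcard' : Fintype.card {j : V // j ≠ ℓ} ≤ n := by
        have h1 : Fintype.card {j : V // ¬ j = ℓ} = Fintype.card V - 1 := by
          rw [Fintype.card_subtype_compl, Fintype.card_subtype_eq]
        have h2 : Fintype.card {j : V // j ≠ ℓ} = Fintype.card {j : V // ¬ j = ℓ} := rfl
        omega
      have hT' : (del T ℓ).IsTree := del_isTree T ℓ hT hdegℓ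
      -- potentials on the smaller tree
      set f : X u → ℝ := fun t => ∑ sℓ : X ℓ, ψ2 u ℓ t sℓ * φ ℓ sℓ with hfdef
      have hf : ∀ t, 0 < f t := by
        intro t
        apply Finset.sum_pos
        · intro sℓ _
          exact mul_pos (hψpos u ℓ huadj.symm t sℓ) (hφ ℓ sℓ)
        · exact Finset.univ_nonempty
      set ψ2' : (a b : {j : V // j ≠ ℓ}) → X a.1 → X b.1 → ℝ :=
        fun a b => ψ2 a.1 b.1 with hψ2'def
      have hψsym' : ∀ a b s t, ψ2' a b s t = ψ2' b a t s := fun a b s t => hψsym a.1 b.1 s t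
      have hψpos' : ∀ a b, (del T ℓ).Adj a b → ∀ s t, 0 < ψ2' a b s t :=
        fun a b h s t => hψpos a.1 b.1 h s t
      set φ' : (j : {j : V // j ≠ ℓ}) → X j.1 → ℝ :=
        Function.update (fun j => φ j.1) u' (fun t => φ u t * f t) with hφ'def
      have hφ'u : φ' u' = fun t => φ u t * f t := Function.update_self u' _ _
      have hφ'ne : ∀ j, j ≠ u' → φ' j = fun t => φ j.1 t := fun j hj =>
        Function.update_of_ne hj _ _
      have hφ' : ∀ j s, 0 < φ' j s := by
        intro j s
        by_cases hj : j = u'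
        · subst hj
          rw [hφ'u]
          exact mul_pos (hφ u s) (hf s)
        · rw [hφ'ne j hj]
          exact hφ j.1 s
      -- the key pointwise identity
      have key : ∀ (t : X ℓ) (y : (j : {j : V // j ≠ ℓ}) → X j.1),
          PT T ψ2 hψsym φ (ins ℓ t y) * f (y u')
            = PT (del T ℓ) ψ2' hψsym' φ' y * (ψ2 u ℓ (y u') t * φ ℓ t) := by
        intro t y
        unfold PT
        rw [prod_edges_split ℓ hℓu huadj huniq]
        rw [prod_vertex_split ℓ (fun i => φ i (ins ℓ t y i))]
        have h1 : Sym2.lift ⟨fun i j => ψ2 i j (ins ℓ t y i) (ins ℓ t y j),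
            fun i j => hψsym i j _ _⟩ s(u, ℓ) = ψ2 u ℓ (y u') t := by
          rw [Sym2.lift_mk]
          show ψ2 u ℓ (ins ℓ t y u) (ins ℓ t y ℓ) = ψ2 u ℓ (y u') t
          rw [ins_self, ins_ne ℓ t y (Ne.symm hℓu)]
        have h2 : ∀ e ∈ (del T ℓ).edgeFinset,
            Sym2.lift ⟨fun i j => ψ2 i j (ins ℓ t y i) (ins ℓ t y j),
              fun i j => hψsym i j _ _⟩ (Sym2.map Subtype.val e)
            = Sym2.lift ⟨fun a b => ψ2' a b (y a) (y b),
                fun a b => hψsym' a b _ _⟩ e := by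
          intro e _
          induction e with
          | _ a b =>
            rw [Sym2.map_pair_eq, Sym2.lift_mk, Sym2.lift_mk]
            show ψ2 a.1 b.1 (ins ℓ t y a.1) (ins ℓ t y b.1) = ψ2 a.1 b.1 (y a) (y b)
            rw [ins_ne ℓ t y a.2, ins_ne ℓ t y b.2]
        rw [Finset.prod_congr rfl h2, h1]
        simp only [ins_self]
        have h3 : ∀ j : {j : V // j ≠ ℓ}, φ j.1 (ins ℓ t y j.1) = φ j.1 (y j) := by
          intro j
          rw [ins_ne ℓ t y j.2]
        rw [Finset.prod_congr rfl fun j _ => h3 j]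
        -- split the vertex products at u'
        rw [← Finset.mul_prod_erase Finset.univ (fun j => φ j.1 (y j)) (Finset.mem_univ u'),
          ← Finset.mul_prod_erase Finset.univ (fun j => φ' j (y j)) (Finset.mem_univ u')]
        have h4 : ∀ j ∈ Finset.univ.erase u', φ' j (y j) = φ j.1 (y j) := by
          intro j hj
          rw [hφ'ne j (Finset.mem_erase.mp hj).1]
        rw [Finset.prod_congr rfl h4, hφ'u]
        ring
      -- summing out the leaf
      have sumout : ∀ y : (j : {j : V // j ≠ ℓ}) → X j.1,
          (∑ t : X ℓ, PT T ψ2 hψsym φ (ins ℓ t y)) = PT (del T ℓ) ψ2' hψsym' φ' y := by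
        intro y
        apply mul_right_cancel₀ (ne_of_gt (hf (y u')))
        rw [Finset.sum_mul]
        rw [Finset.sum_congr rfl fun t _ => key t y]
        rw [← Finset.mul_sum]
      -- marginal transfer for vertices other than ℓ
      have hQ1' : ∀ (i : {j : V // j ≠ ℓ}) (s : X i.1),
          Q1 T ψ2 hψsym φ i.1 s = Q1 (del T ℓ) ψ2' hψsym' φ' i s := by
        intro i s
        unfold Q1
        rw [sum_split ℓ, Finset.sum_comm]
        apply Finset.sum_congr rfl
        intro y _
        have h5 : ∀ t : X ℓ,
            (if ins ℓ t y i.1 = s then PT T ψ2 hψsym φ (ins ℓ t y) else 0)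
            = if y i = s then PT T ψ2 hψsym φ (ins ℓ t y) else 0 := by
          intro t
          rw [ins_ne ℓ t y i.2]
        rw [Finset.sum_congr rfl fun t _ => h5 t, sum_ite_const, sumout]
      -- pairwise marginal transfer for edges away from ℓ
      have hQ2' : ∀ (a b : {j : V // j ≠ ℓ}) (s : X a.1) (t : X b.1),
          Q2 T ψ2 hψsym φ a.1 b.1 s t = Q2 (del T ℓ) ψ2' hψsym' φ' a b s t := by
        intro a b s t
        unfold Q2
        rw [sum_split ℓ, Finset.sum_comm]
        apply Finset.sum_congr rfl
        intro y _
        have h5 : ∀ tℓ : X ℓ,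
            (if ins ℓ tℓ y a.1 = s ∧ ins ℓ tℓ y b.1 = t
              then PT T ψ2 hψsym φ (ins ℓ tℓ y) else 0)
            = if y a = s ∧ y b = t then PT T ψ2 hψsym φ (ins ℓ tℓ y) else 0 := by
          intro tℓ
          rw [ins_ne ℓ tℓ y a.2, ins_ne ℓ tℓ y b.2]
        rw [Finset.sum_congr rfl fun tℓ _ => h5 tℓ, sum_ite_const, sumout]
      -- pairwise marginal on the leaf edge
      have hQ2uℓ : ∀ (s : X u) (tℓ : X ℓ),
          Q2 T ψ2 hψsym φ u ℓ s tℓ * f s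
            = Q1 (del T ℓ) ψ2' hψsym' φ' u' s * (ψ2 u ℓ s tℓ * φ ℓ tℓ) := by
        intro s tℓ
        unfold Q2
        rw [sum_split ℓ, Finset.sum_comm]
        have h5 : ∀ y : (j : {j : V // j ≠ ℓ}) → X j.1,
            (∑ t : X ℓ, if ins ℓ t y u = s ∧ ins ℓ t y ℓ = tℓ
              then PT T ψ2 hψsym φ (ins ℓ t y) else 0)
            = if y u' = s then PT T ψ2 hψsym φ (ins ℓ tℓ y) else 0 := by
          intro y
          have h6 : ∀ t : X ℓ,
              (if ins ℓ t y u = s ∧ ins ℓ t y ℓ = tℓ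
                then PT T ψ2 hψsym φ (ins ℓ t y) else 0)
              = if y u' = s then (if t = tℓ then PT T ψ2 hψsym φ (ins ℓ t y) else 0)
                  else 0 := by
            intro t
            rw [ins_ne ℓ t y (Ne.symm hℓu), ins_self, ite_and]
          rw [Finset.sum_congr rfl fun t _ => h6 t, sum_ite_const,
            Finset.sum_ite_eq' Finset.univ tℓ (fun t => PT T ψ2 hψsym φ (ins ℓ t y))]
          simp only [Finset.mem_univ, if_true]
        rw [Finset.sum_congr rfl fun y _ => h5 y, Finset.sum_mul]
        unfold Q1
        rw [Finset.sum_mul]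
        apply Finset.sum_congr rfl
        intro y _
        by_cases hy : y u' = s
        · rw [if_pos hy, if_pos hy, ← hy, key tℓ y]
        · rw [if_neg hy, if_neg hy, zero_mul, zero_mul]
      -- degree bookkeeping
      have hdegu : (T.degree u : ℤ) - 1 = ((del T ℓ).degree u' : ℤ) - 1 + 1 := by
        have := del_degree_u (T := T) ℓ hℓu huadj
        push_cast [← this]
        ring
      have hdegne : ∀ j : {j : V // j ≠ ℓ}, j ≠ u' →
          (T.degree j.1 : ℤ) = (del T ℓ).degree j := by
        intro j hj
        rw [del_degree_ne ℓ huniq j (fun h => hj (Subtype.ext h))]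
      -- the product of Q1-powers
      have hQ1u'pos : 0 < Q1 (del T ℓ) ψ2' hψsym' φ' u' (x u) :=
        Q1_pos (del T ℓ) ψ2' hψsym' hψpos' φ' hφ' u' (x u)
      have hprodQ1 : ∏ i, Q1 T ψ2 hψsym φ i (x i) ^ ((T.degree i : ℤ) - 1)
          = Q1 (del T ℓ) ψ2' hψsym' φ' u' (x u)
            * ∏ j : {j : V // j ≠ ℓ},
                Q1 (del T ℓ) ψ2' hψsym' φ' j (x j.1) ^ (((del T ℓ).degree j : ℤ) - 1) := by
        rw [prod_vertex_split ℓ (fun i => Q1 T ψ2 hψsym φ i (x i) ^ ((T.degree i : ℤ) - 1))]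
        rw [hdegℓ]
        norm_num
        have h7 : ∀ j : {j : V // j ≠ ℓ},
            Q1 T ψ2 hψsym φ j.1 (x j.1) ^ ((T.degree j.1 : ℤ) - 1)
            = Q1 (del T ℓ) ψ2' hψsym' φ' j (x j.1) ^ ((T.degree j.1 : ℤ) - 1) := by
          intro j
          rw [hQ1' j (x j.1)]
        rw [Finset.prod_congr rfl fun j _ => h7 j]
        rw [← Finset.mul_prod_erase Finset.univ _ (Finset.mem_univ u'),
          ← Finset.mul_prod_erase Finset.univ
            (fun j => Q1 (del T ℓ) ψ2' hψsym' φ' j (x j.1) ^ (((del T ℓ).degree j : ℤ) - 1))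
            (Finset.mem_univ u')]
        rw [hdegu, zpow_add₀ (ne_of_gt hQ1u'pos), zpow_one]
        rw [Finset.prod_congr rfl fun j hj => by
          rw [hdegne j (Finset.mem_erase.mp hj).1]]
        ring
      -- apply the induction hypothesis
      have IH := ih {j : V // j ≠ ℓ} (fun j => X j.1) hcard' (del T ℓ) hT'
        ψ2' hψsym' hψpos' φ' hφ' (fun j => x j.1)
      -- assemble
      have hx : ins ℓ (x ℓ) (fun j => x j.1) = x := ins_eta ℓ x
      apply mul_right_cancel₀ (ne_of_gt (hf (x u)))
      have hkeyx : PT T ψ2 hψsym φ x * f (x u)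
          = PT (del T ℓ) ψ2' hψsym' φ' (fun j => x j.1) * (ψ2 u ℓ (x u) (x ℓ) * φ ℓ (x ℓ)) := by
        rw [← hx]
        have := key (x ℓ) (fun j => x j.1)
        rw [ins_eta] at this ⊢
        exact this
      -- RHS: split the edge product
      rw [prod_edges_split ℓ hℓu huadj huniq (F := fun e =>
        Sym2.lift ⟨fun i j => Q2 T ψ2 hψsym φ i j (x i) (x j),
          fun i j => Q2_symm T ψ2 hψsym φ i j (x i) (x j)⟩ e)]
      have h8 : ∀ e ∈ (del T ℓ).edgeFinset,
          Sym2.lift ⟨fun i j => Q2 T ψ2 hψsym φ i j (x i) (x j),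
            fun i j => Q2_symm T ψ2 hψsym φ i j (x i) (x j)⟩ (Sym2.map Subtype.val e)
          = Sym2.lift ⟨fun a b => Q2 (del T ℓ) ψ2' hψsym' φ' a b (x a.1) (x b.1),
              fun a b => Q2_symm (del T ℓ) ψ2' hψsym' φ' a b (x a.1) (x b.1)⟩ e := by
        intro e _
        induction e with
        | _ a b =>
          rw [Sym2.map_pair_eq, Sym2.lift_mk, Sym2.lift_mk]
          show Q2 T ψ2 hψsym φ a.1 b.1 (x a.1) (x b.1)
            = Q2 (del T ℓ) ψ2' hψsym' φ' a b (x a.1) (x b.1)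
          exact hQ2' a b (x a.1) (x b.1)
      have hlift : Sym2.lift ⟨fun i j => Q2 T ψ2 hψsym φ i j (x i) (x j),
          fun i j => Q2_symm T ψ2 hψsym φ i j (x i) (x j)⟩ s(u, ℓ)
          = Q2 T ψ2 hψsym φ u ℓ (x u) (x ℓ) := Sym2.lift_mk _ u ℓ
      rw [Finset.prod_congr rfl h8, hlift]
      rw [hprodQ1]
      calc PT T ψ2 hψsym φ x
            * (Q1 (del T ℓ) ψ2' hψsym' φ' u' (x u)
              * ∏ j : {j : V // j ≠ ℓ},
                  Q1 (del T ℓ) ψ2' hψsym' φ' j (x j.1) ^ (((del T ℓ).degree j : ℤ) - 1))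
            * f (x u)
          = (PT T ψ2 hψsym φ x * f (x u))
            * Q1 (del T ℓ) ψ2' hψsym' φ' u' (x u)
            * ∏ j : {j : V // j ≠ ℓ},
                Q1 (del T ℓ) ψ2' hψsym' φ' j (x j.1) ^ (((del T ℓ).degree j : ℤ) - 1) := by
            ring
        _ = (PT (del T ℓ) ψ2' hψsym' φ' (fun j => x j.1)
              * ∏ j : {j : V // j ≠ ℓ},
                  Q1 (del T ℓ) ψ2' hψsym' φ' j (x j.1) ^ (((del T ℓ).degree j : ℤ) - 1))
            * (Q1 (del T ℓ) ψ2' hψsym' φ' u' (x u) * (ψ2 u ℓ (x u) (x ℓ) * φ ℓ (x ℓ))) := by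
            rw [hkeyx]; ring
        _ = (∏ e ∈ (del T ℓ).edgeFinset,
              Sym2.lift ⟨fun a b => Q2 (del T ℓ) ψ2' hψsym' φ' a b (x a.1) (x b.1),
                fun a b => Q2_symm (del T ℓ) ψ2' hψsym' φ' a b (x a.1) (x b.1)⟩ e)
            * (Q2 T ψ2 hψsym φ u ℓ (x u) (x ℓ) * f (x u)) := by
            rw [IH, hQ2uℓ (x u) (x ℓ)]
        _ = Q2 T ψ2 hψsym φ u ℓ (x u) (x ℓ)
            * (∏ e ∈ (del T ℓ).edgeFinset,
              Sym2.lift ⟨fun a b => Q2 (del T ℓ) ψ2' hψsym' φ' a b (x a.1) (x b.1),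
                fun a b => Q2_symm (del T ℓ) ψ2' hψsym' φ' a b (x a.1) (x b.1)⟩ e)
            * f (x u) := by
            ring


end TreeMRF

end TreeMRFAux

/-- **Tree factorization of a pairwise MRF on a tree.**
Let `p(x) = p̃(x)/Z` be the pairwise Markov random field on a tree `T`, where
`p̃(x) = Π_{{i,j}∈E(T)} ψ_{ij}(x_i, x_j)` with strictly positive symmetric edge
potentials and `Z = Σ_x p̃(x)`.  Then `p` factorizes in terms of its own
marginals according to the tree:
`p(x) = (Π_{{i,j}∈E(T)} p_{ij}(x_i,x_j)) · Π_i p_i(x_i)^{1 - deg(i)}`. -/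
theorem tree_mrf_factorizes_via_marginals (V : Type*) [Fintype V] [DecidableEq V] [Nonempty V]
    (X : V → Type*) [∀ i, Fintype (X i)] [∀ i, Nonempty (X i)] [∀ i, DecidableEq (X i)]
    (T : SimpleGraph V) [DecidableRel T.Adj] (hT : T.IsTree)
    (ψ2 : (i j : V) → X i → X j → ℝ)
    (hψsym : ∀ i j s t, ψ2 i j s t = ψ2 j i t s)
    (hψpos : ∀ i j, T.Adj i j → ∀ s t, 0 < ψ2 i j s t)
    (ptil : ((i : V) → X i) → ℝ)
    (hptil : ∀ x, ptil x = ∏ e ∈ T.edgeFinset,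
      Sym2.lift ⟨fun i j => ψ2 i j (x i) (x j), fun i j => hψsym i j (x i) (x j)⟩ e)
    (p : ((i : V) → X i) → ℝ)
    (hp : ∀ x, p x = ptil x / ∑ y : (i : V) → X i, ptil y) :
    ∀ x : (i : V) → X i,
      p x = (∏ e ∈ T.edgeFinset,
          Sym2.lift ⟨fun i j => marg2 p i j (x i) (x j),
            fun i j => marg2_symm p i j (x i) (x j)⟩ e)
        * ∏ i : V, marg1 p i (x i) ^ ((1 : ℤ) - T.degree i) := by
  classical
  set φ1 : (i : V) → X i → ℝ := fun _ _ => (1 : ℝ) with hφ1def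
  have hφ1 : ∀ (i : V) (s : X i), 0 < φ1 i s := fun _ _ => one_pos
  have hPT1 : ∀ z, TreeMRF.PT T ψ2 hψsym φ1 z = ptil z := by
    intro z
    unfold TreeMRF.PT
    rw [hptil z]
    simp [hφ1def]
  have hptilpos : ∀ z, 0 < ptil z := by
    intro z
    rw [← hPT1 z]
    exact TreeMRF.PT_pos T ψ2 hψsym hψpos φ1 hφ1 z
  haveI : Nonempty ((i : V) → X i) := ⟨fun i => Classical.arbitrary _⟩
  set Z : ℝ := ∑ y : (i : V) → X i, ptil y with hZdef
  have hZpos : 0 < Z := Finset.sum_pos (fun y _ => hptilpos y) Finset.univ_nonempty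
  have hZne : Z ≠ 0 := ne_of_gt hZpos
  have hmarg1 : ∀ (i : V) (s : X i),
      marg1 p i s = TreeMRF.Q1 T ψ2 hψsym φ1 i s / Z := by
    intro i s
    have h1 : TreeMRF.Q1 T ψ2 hψsym φ1 i s
        = ∑ x ∈ Finset.univ.filter (fun x : (i : V) → X i => x i = s), ptil x := by
      unfold TreeMRF.Q1
      rw [Finset.sum_filter]
      exact Finset.sum_congr rfl fun x _ => if_congr Iff.rfl (hPT1 x) rfl
    unfold marg1
    rw [Finset.sum_congr rfl fun x _ => hp x, ← Finset.sum_div, h1]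
  have hmarg2 : ∀ (i j : V) (s : X i) (t : X j),
      marg2 p i j s t = TreeMRF.Q2 T ψ2 hψsym φ1 i j s t / Z := by
    intro i j s t
    have h1 : TreeMRF.Q2 T ψ2 hψsym φ1 i j s t
        = ∑ x ∈ Finset.univ.filter (fun x : (i : V) → X i => x i = s ∧ x j = t), ptil x := by
      unfold TreeMRF.Q2
      rw [Finset.sum_filter]
      exact Finset.sum_congr rfl fun x _ => if_congr Iff.rfl (hPT1 x) rfl
    unfold marg2
    rw [Finset.sum_congr rfl fun x _ => hp x, ← Finset.sum_div, h1]
  intro x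
  have hQ1pos : ∀ i : V, 0 < TreeMRF.Q1 T ψ2 hψsym φ1 i (x i) :=
    fun i => TreeMRF.Q1_pos T ψ2 hψsym hψpos φ1 hφ1 i (x i)
  have hcore := TreeMRF.core (Fintype.card V) V X le_rfl T hT ψ2 hψsym hψpos φ1 hφ1 x
  have hcardE : T.edgeFinset.card + 1 = Fintype.card V := hT.card_edgeFinset
  have hsumdeg : ∑ i : V, T.degree i = 2 * T.edgeFinset.card :=
    T.sum_degrees_eq_twice_card_edges
  set E : ℕ := T.edgeFinset.card with hEdef
  have hsum1 : ∑ i : V, ((T.degree i : ℤ) - 1) = (E : ℤ) - 1 := by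
    have h2' : ∑ i : V, (T.degree i : ℤ) = 2 * E := by exact_mod_cast hsumdeg
    have h3' : (Fintype.card V : ℤ) = (E : ℤ) + 1 := by exact_mod_cast hcardE.symm
    rw [Finset.sum_sub_distrib, h2']
    simp only [Finset.sum_const, Finset.card_univ, nsmul_eq_mul, mul_one]
    rw [h3']
    ring
  -- step 1 : edge marginal product
  have step1 : (∏ e ∈ T.edgeFinset,
        Sym2.lift ⟨fun i j => marg2 p i j (x i) (x j),
          fun i j => marg2_symm p i j (x i) (x j)⟩ e)
      = (∏ e ∈ T.edgeFinset,
          Sym2.lift ⟨fun i j => TreeMRF.Q2 T ψ2 hψsym φ1 i j (x i) (x j),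
            fun i j => TreeMRF.Q2_symm T ψ2 hψsym φ1 i j (x i) (x j)⟩ e) / Z ^ E := by
    have h9 : ∀ e ∈ T.edgeFinset,
        Sym2.lift ⟨fun i j => marg2 p i j (x i) (x j),
          fun i j => marg2_symm p i j (x i) (x j)⟩ e
        = Sym2.lift ⟨fun i j => TreeMRF.Q2 T ψ2 hψsym φ1 i j (x i) (x j),
            fun i j => TreeMRF.Q2_symm T ψ2 hψsym φ1 i j (x i) (x j)⟩ e / Z := by
      intro e _
      induction e with
      | _ a b =>
        rw [Sym2.lift_mk, Sym2.lift_mk]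
        show marg2 p a b (x a) (x b) = TreeMRF.Q2 T ψ2 hψsym φ1 a b (x a) (x b) / Z
        exact hmarg2 a b (x a) (x b)
    rw [Finset.prod_congr rfl h9, Finset.prod_div_distrib, Finset.prod_const]
  -- step 2 : vertex marginal product
  have step2 : (∏ i : V, marg1 p i (x i) ^ ((1 : ℤ) - T.degree i))
      = (∏ i : V, TreeMRF.Q1 T ψ2 hψsym φ1 i (x i) ^ ((1 : ℤ) - T.degree i))
        * Z ^ ((E : ℤ) - 1) := by
    have h10 : ∀ i : V, marg1 p i (x i) ^ ((1 : ℤ) - T.degree i)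
        = TreeMRF.Q1 T ψ2 hψsym φ1 i (x i) ^ ((1 : ℤ) - T.degree i)
          * Z ^ ((T.degree i : ℤ) - 1) := by
      intro i
      rw [hmarg1 i (x i), div_zpow, div_eq_mul_inv, ← zpow_neg Z, neg_sub]
    rw [Finset.prod_congr rfl fun i _ => h10 i, Finset.prod_mul_distrib,
      TreeMRF.prod_zpow_sum Finset.univ hZne, hsum1]
  rw [hp x, step1, step2, ← hcore, hPT1 x]
  have hQQ : (∏ i : V, TreeMRF.Q1 T ψ2 hψsym φ1 i (x i) ^ ((T.degree i : ℤ) - 1))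
      * (∏ i : V, TreeMRF.Q1 T ψ2 hψsym φ1 i (x i) ^ ((1 : ℤ) - T.degree i)) = 1 := by
    rw [← Finset.prod_mul_distrib]
    rw [Finset.prod_congr rfl fun i _ => by
      rw [← zpow_add₀ (ne_of_gt (hQ1pos i)),
        show ((T.degree i : ℤ) - 1) + ((1 : ℤ) - T.degree i) = 0 by ring, zpow_zero]]
    exact Finset.prod_const_one
  have hZZ : Z ^ ((E : ℤ) - 1) * (Z ^ E)⁻¹ = Z⁻¹ := by
    rw [← zpow_natCast Z E, ← zpow_neg, ← zpow_add₀ hZne,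
      show ((E : ℤ) - 1) + (-(E : ℤ)) = -1 by ring, zpow_neg_one]
  calc ptil x / Z
      = ptil x
        * ((∏ i : V, TreeMRF.Q1 T ψ2 hψsym φ1 i (x i) ^ ((T.degree i : ℤ) - 1))
          * (∏ i : V, TreeMRF.Q1 T ψ2 hψsym φ1 i (x i) ^ ((1 : ℤ) - T.degree i)))
        * (Z ^ ((E : ℤ) - 1) * (Z ^ E)⁻¹) := by
        rw [hQQ, hZZ]
        ring
    _ = ptil x
          * (∏ i : V, TreeMRF.Q1 T ψ2 hψsym φ1 i (x i) ^ ((T.degree i : ℤ) - 1)) / Z ^ E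
          * ((∏ i : V, TreeMRF.Q1 T ψ2 hψsym φ1 i (x i) ^ ((1 : ℤ) - T.degree i))
            * Z ^ ((E : ℤ) - 1)) := by
        ring
end

section
/- Let p(x) = p̃(x)/Z be the pairwise Markov random field on the tree T, where p̃(x) = ∏_{{i,j}∈E(T)} ψ_{ij}(x_i, x_j) and Z = Σ_x p̃(x). Then the Bethe free energy evaluated at the exact marginals of p (i.e., with beliefs b_i = p_i and b_{ij} = p_{ij}) equals the negative log-partition function: F_B = -ln Z. -/
set_option linter.unusedSectionVars false
set_option maxHeartbeats 1000000


open Finset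

variable {V : Type*} [Fintype V] [DecidableEq V]
  {X : V → Type*} [∀ i, Fintype (X i)] [∀ i, DecidableEq (X i)]

section BetheAux

lemma sum_update_fiber (ℓ : V) (A : Finset ((i : V) → X i))
    (hA : ∀ x ∈ A, ∀ a, Function.update x ℓ a ∈ A)
    (f : ((i : V) → X i) → ℝ) (s t : X ℓ) :
    ∑ x ∈ A.filter (fun x => x ℓ = t), f (Function.update x ℓ s)
      = ∑ x ∈ A.filter (fun x => x ℓ = s), f x := by
  refine Finset.sum_nbij' (fun x => Function.update x ℓ s)
    (fun x => Function.update x ℓ t) ?_ ?_ ?_ ?_ ?_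
  · intro x hx
    rw [mem_filter] at hx ⊢
    exact ⟨hA x hx.1 s, Function.update_self _ _ _⟩
  · intro x hx
    rw [mem_filter] at hx ⊢
    exact ⟨hA x hx.1 t, Function.update_self _ _ _⟩
  · intro x hx
    rw [mem_filter] at hx
    funext i
    by_cases hi : i = ℓ
    · subst hi; simp [hx.2]
    · simp [Function.update_of_ne hi]
  · intro x hx
    rw [mem_filter] at hx
    funext i
    by_cases hi : i = ℓ
    · subst hi; simp [hx.2]
    · simp [Function.update_of_ne hi]
  · intro x hx; rfl

lemma sum_coord_split (ℓ : V) (A : Finset ((i : V) → X i))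
    (hA : ∀ x ∈ A, ∀ a, Function.update x ℓ a ∈ A)
    (B : X ℓ → ((i : V) → X i) → ℝ)
    (hB : ∀ a x b, B a (Function.update x ℓ b) = B a x) (c : X ℓ) :
    ∑ x ∈ A, B (x ℓ) x = ∑ x ∈ A.filter (fun x => x ℓ = c), ∑ a, B a x := by
  rw [← Finset.sum_fiberwise A (fun x => x ℓ) (fun x => B (x ℓ) x)]
  rw [Finset.sum_comm]
  refine Finset.sum_congr rfl fun a _ => ?_
  have h1 : ∑ x ∈ A.filter (fun x => x ℓ = a), B (x ℓ) x
      = ∑ x ∈ A.filter (fun x => x ℓ = a), B a x :=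
    Finset.sum_congr rfl fun x hx => by rw [(mem_filter.mp hx).2]
  rw [h1, ← sum_update_fiber ℓ A hA (B a) a c]
  exact Finset.sum_congr rfl fun x _ => hB a x a

lemma sum_fiber_const (ℓ : V) (A : Finset ((i : V) → X i))
    (hA : ∀ x ∈ A, ∀ a, Function.update x ℓ a ∈ A)
    (f : ((i : V) → X i) → ℝ) (hf : ∀ x a, f (Function.update x ℓ a) = f x) (s c : X ℓ) :
    ∑ x ∈ A.filter (fun x => x ℓ = s), f x = ∑ x ∈ A.filter (fun x => x ℓ = c), f x := by
  rw [← sum_update_fiber ℓ A hA f s c]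
  exact Finset.sum_congr rfl fun x _ => hf x s

variable [∀ i, Nonempty (X i)]

lemma marg1_pos (p : ((i : V) → X i) → ℝ) (hp : ∀ x, 0 < p x) (i : V) (s : X i) :
    0 < marg1 p i s := by
  refine Finset.sum_pos (fun x _ => hp x) ?_
  exact ⟨Function.update (Classical.arbitrary _) i s, by simp⟩

lemma marg2_pos (p : ((i : V) → X i) → ℝ) (hp : ∀ x, 0 < p x) {i j : V} (hij : i ≠ j)
    (s : X i) (t : X j) : 0 < marg2 p i j s t := by
  refine Finset.sum_pos (fun x _ => hp x) ?_
  refine ⟨Function.update (Function.update (Classical.arbitrary _) j t) i s, ?_⟩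
  simp [Function.update_of_ne (Ne.symm hij)]

lemma sum_marg1_mul (p : ((i : V) → X i) → ℝ) (i : V) (f : X i → ℝ) :
    ∑ s, marg1 p i s * f s = ∑ x, p x * f (x i) := by
  unfold marg1
  rw [← Finset.sum_fiberwise Finset.univ (fun x => x i) (fun x => p x * f (x i))]
  refine Finset.sum_congr rfl fun s _ => ?_
  rw [Finset.sum_mul]
  exact Finset.sum_congr rfl fun x hx => by rw [(mem_filter.mp hx).2]

lemma sum_marg2_mul (p : ((i : V) → X i) → ℝ) (i j : V) (f : X i → X j → ℝ) :
    ∑ s, ∑ t, marg2 p i j s t * f s t = ∑ x, p x * f (x i) (x j) := by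
  unfold marg2
  rw [← Finset.sum_fiberwise Finset.univ (fun x => x i) (fun x => p x * f (x i) (x j))]
  refine Finset.sum_congr rfl fun s _ => ?_
  rw [← Finset.sum_fiberwise (Finset.univ.filter (fun x => x i = s)) (fun x => x j)
    (fun x => p x * f (x i) (x j))]
  refine Finset.sum_congr rfl fun t _ => ?_
  rw [Finset.filter_filter, Finset.sum_mul]
  refine Finset.sum_congr rfl fun x hx => ?_
  have h := (mem_filter.mp hx).2
  rw [h.1, h.2]

omit [∀ i, Fintype (X i)] [∀ i, DecidableEq (X i)] [∀ i, Nonempty (X i)] in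
lemma exists_leaf {F : SimpleGraph V} [DecidableRel F.Adj] (hac : F.IsAcyclic)
    {a u0 : V} (h0 : F.Adj a u0) :
    ∃ ℓ u : V, F.Adj ℓ u ∧ F.neighborFinset ℓ = {u} := by
  classical
  obtain ⟨b, -, hmax⟩ := Finset.exists_max_image Finset.univ (F.dist a) ⟨a, mem_univ a⟩
  have hdu0 : F.dist a u0 = 1 := (SimpleGraph.dist_eq_one_iff_adj).mpr h0
  have hd1 : 1 ≤ F.dist a b := by
    have := hmax u0 (mem_univ u0); omega
  have hab : a ≠ b := by
    intro h; subst h; simp [SimpleGraph.dist_self] at hd1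
  have hreach : F.Reachable a b := SimpleGraph.Reachable.of_dist_ne_zero (by omega)
  obtain ⟨W, hWp, hWl⟩ := hreach.exists_path_of_dist
  obtain ⟨w, hbw, q, hq⟩ := SimpleGraph.Walk.exists_eq_cons_of_ne (Ne.symm hab) W.reverse
  refine ⟨b, w, hbw, ?_⟩
  have hkey : ∀ c : V, F.Adj b c → c = w := by
    intro c hc
    have hrc : F.Reachable a c := hreach.trans hc.reachable
    obtain ⟨P, hPp, hPl⟩ := hrc.exists_path_of_dist
    have hPled : P.length ≤ F.dist a b := by
      rw [hPl]; exact hmax c (mem_univ c)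
    by_cases hbP : b ∈ P.support
    · exfalso
      have h1 : F.dist a b ≤ (P.takeUntil b hbP).length := SimpleGraph.dist_le _
      have h2 := P.length_takeUntil_le hbP
      have h3 : (P.takeUntil b hbP).length + (P.dropUntil b hbP).length = P.length := by
        rw [← SimpleGraph.Walk.length_append, SimpleGraph.Walk.take_spec]
      have h4 : (P.dropUntil b hbP).length = 0 := by omega
      exact hc.ne (SimpleGraph.Walk.eq_of_length_eq_zero h4)
    · have hQp : (P.concat hc.symm).IsPath := by
        rw [← SimpleGraph.Walk.isPath_reverse_iff, SimpleGraph.Walk.reverse_concat,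
          SimpleGraph.Walk.cons_isPath_iff]
        exact ⟨hPp.reverse, by simpa [SimpleGraph.Walk.support_reverse] using hbP⟩
      have huniq := hac.path_unique ⟨W, hWp⟩ ⟨P.concat hc.symm, hQp⟩
      have hWQ : W = P.concat hc.symm := congrArg Subtype.val huniq
      have hrev : W.reverse = SimpleGraph.Walk.cons hc.symm.symm P.reverse := by
        rw [hWQ, SimpleGraph.Walk.reverse_concat]
      rw [hq] at hrev
      have hs := congrArg SimpleGraph.Walk.support hrev
      rw [SimpleGraph.Walk.support_cons, SimpleGraph.Walk.support_cons,
        SimpleGraph.Walk.support_eq_cons q, SimpleGraph.Walk.support_eq_cons P.reverse] at hs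
      simp only [List.cons.injEq] at hs
      exact hs.2.1.symm
  ext c
  simp only [SimpleGraph.mem_neighborFinset, Finset.mem_singleton]
  exact ⟨fun h => hkey c h, fun h => h ▸ hbw⟩

noncomputable def PP (ψ2 : (i j : V) → X i → X j → ℝ)
    (hψsym : ∀ i j s t, ψ2 i j s t = ψ2 j i t s)
    (F : SimpleGraph V) [DecidableRel F.Adj] (φ : (i : V) → X i → ℝ)
    (x : (i : V) → X i) : ℝ :=
  (∏ e ∈ F.edgeFinset, Sym2.lift ⟨fun i j => ψ2 i j (x i) (x j),
      fun i j => hψsym i j (x i) (x j)⟩ e) * ∏ i, φ i (x i)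

lemma PP_pos (ψ2 : (i j : V) → X i → X j → ℝ)
    (hψsym : ∀ i j s t, ψ2 i j s t = ψ2 j i t s)
    (F : SimpleGraph V) [DecidableRel F.Adj] (φ : (i : V) → X i → ℝ)
    (hψpos : ∀ i j, F.Adj i j → ∀ s t, 0 < ψ2 i j s t)
    (hφpos : ∀ i s, 0 < φ i s) (x : (i : V) → X i) :
    0 < PP ψ2 hψsym F φ x := by
  refine mul_pos (Finset.prod_pos ?_) (Finset.prod_pos fun i _ => hφpos i _)
  intro e he
  induction e using Sym2.ind with
  | _ i j =>
    rw [Sym2.lift_mk]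
    exact hψpos i j (by simpa using he) _ _

noncomputable def logm2 (p : ((i : V) → X i) → ℝ) (x : (i : V) → X i) : Sym2 V → ℝ :=
  Sym2.lift ⟨fun i j => Real.log (marg2 p i j (x i) (x j)),
    fun i j => congrArg Real.log (marg2_symm p i j (x i) (x j))⟩

@[simp] lemma logm2_mk (p : ((i : V) → X i) → ℝ) (x : (i : V) → X i) (i j : V) :
    logm2 p x s(i, j) = Real.log (marg2 p i j (x i) (x j)) := rfl

theorem key (ψ2 : (i j : V) → X i → X j → ℝ)
    (hψsym : ∀ i j s t, ψ2 i j s t = ψ2 j i t s) :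
    ∀ (n : ℕ) (F : SimpleGraph V) [DecidableRel F.Adj] (φ : (i : V) → X i → ℝ),
      F.edgeFinset.card = n → F.IsAcyclic →
      (∀ i j, F.Adj i j → ∀ s t, 0 < ψ2 i j s t) →
      (∀ i s, 0 < φ i s) → ∀ x,
      ∑ e ∈ F.edgeFinset, logm2 (PP ψ2 hψsym F φ) x e
        = Real.log (PP ψ2 hψsym F φ x)
          + ∑ i, ((F.degree i : ℝ) - 1) * Real.log (marg1 (PP ψ2 hψsym F φ) i (x i))
          + ((Fintype.card V : ℝ) - n - 1) * Real.log (∑ y, PP ψ2 hψsym F φ y) := by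
  intro n
  induction n with
  | zero =>
    intro F _ φ hcard hac hψpos hφpos x
    have hE : F.edgeFinset = ∅ := Finset.card_eq_zero.mp hcard
    set PF := PP ψ2 hψsym F φ with hPF
    have hPP : ∀ y, PF y = ∏ i, φ i (y i) := by
      intro y; rw [hPF]; unfold PP; rw [hE, Finset.prod_empty, one_mul]
    have hdeg : ∀ i, F.degree i = 0 := by
      intro i
      rw [← SimpleGraph.card_neighborFinset_eq_degree, Finset.card_eq_zero]
      ext b
      simp only [SimpleGraph.mem_neighborFinset, Finset.notMem_empty, iff_false]
      intro hadj
      have : s(i, b) ∈ F.edgeFinset := SimpleGraph.mem_edgeFinset.mpr hadj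
      rw [hE] at this; exact absurd this (Finset.notMem_empty _)
    -- per-site partition functions
    set Zφ : V → ℝ := fun i => ∑ a, φ i a with hZφ
    have hZφpos : ∀ i, 0 < Zφ i := fun i => Finset.sum_pos (fun a _ => hφpos i a) univ_nonempty
    set Z : ℝ := ∑ y, PF y with hZ
    have hZpos : 0 < Z := Finset.sum_pos (fun y _ =>
      PP_pos ψ2 hψsym F φ hψpos hφpos y) univ_nonempty
    -- marginal relation
    have hm1 : ∀ (i : V) (s : X i), marg1 PF i s * Zφ i = φ i s * Z := by
      intro i s
      have hR : ∀ (y : (i : V) → X i) (a : X i),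
          (∏ j ∈ Finset.univ.erase i, φ j (Function.update y i a j))
            = ∏ j ∈ Finset.univ.erase i, φ j (y j) := by
        intro y a
        refine Finset.prod_congr rfl fun j hj => ?_
        rw [Function.update_of_ne (Finset.mem_erase.mp hj).1]
      have hsplit := sum_coord_split i Finset.univ (fun x _ a => Finset.mem_univ _)
        (fun (a : X i) (y : (i : V) → X i) => φ i a * ∏ j ∈ Finset.univ.erase i, φ j (y j))
        (fun a y b => by rw [hR y b]) s
      have hZeq : Z = ∑ y : (i : V) → X i, φ i (y i) * ∏ j ∈ Finset.univ.erase i, φ j (y j) := by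
        rw [hZ]
        refine Finset.sum_congr rfl fun y _ => ?_
        rw [hPP y, ← Finset.mul_prod_erase Finset.univ _ (Finset.mem_univ i)]
      have hm1eq : marg1 PF i s
          = φ i s * ∑ y ∈ Finset.univ.filter (fun y : (i : V) → X i => y i = s),
              ∏ j ∈ Finset.univ.erase i, φ j (y j) := by
        unfold marg1
        rw [Finset.mul_sum]
        refine Finset.sum_congr rfl fun y hy => ?_
        rw [hPP y, ← Finset.mul_prod_erase Finset.univ _ (Finset.mem_univ i),
          (Finset.mem_filter.mp hy).2]
      rw [hZeq, hsplit, hm1eq]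
      have : ∀ y : (i : V) → X i, (∑ a, φ i a * ∏ j ∈ Finset.univ.erase i, φ j (y j))
          = Zφ i * ∏ j ∈ Finset.univ.erase i, φ j (y j) := fun y => by
        rw [hZφ, Finset.sum_mul]
      rw [Finset.sum_congr rfl fun y _ => this y, ← Finset.mul_sum]
      ring
    -- product of sums
    have hZprod : Z = ∏ i, Zφ i := by
      rw [hZ, hZφ]
      rw [Finset.prod_univ_sum]
      rw [Fintype.piFinset_univ]
      exact Finset.sum_congr rfl fun y _ => hPP y
    -- now the logs
    have hlog1 : ∀ i, Real.log (marg1 PF i (x i))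
        = Real.log (φ i (x i)) + Real.log Z - Real.log (Zφ i) := by
      intro i
      have h := congrArg Real.log (hm1 i (x i))
      rw [Real.log_mul (ne_of_gt (marg1_pos PF (PP_pos ψ2 hψsym F φ hψpos hφpos) i (x i)))
          (ne_of_gt (hZφpos i)),
        Real.log_mul (ne_of_gt (hφpos i (x i))) (ne_of_gt hZpos)] at h
      linarith
    have hlogZ : Real.log Z = ∑ i, Real.log (Zφ i) := by
      rw [hZprod]
      exact Real.log_prod fun i _ => ne_of_gt (hZφpos i)
    have hlogP : Real.log (PF x) = ∑ i, Real.log (φ i (x i)) := by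
      rw [hPP x]
      exact Real.log_prod fun i _ => ne_of_gt (hφpos i (x i))
    rw [hE, Finset.sum_empty, hlogP]
    have hsum2 : ∑ i, ((F.degree i : ℝ) - 1) * Real.log (marg1 PF i (x i))
        = ∑ i, (0 - 1 : ℝ) * (Real.log (φ i (x i)) + Real.log Z - Real.log (Zφ i)) :=
      Finset.sum_congr rfl fun i _ => by rw [hdeg i, hlog1 i]; norm_num
    rw [hsum2]
    push_cast
    simp only [zero_sub, neg_one_mul, neg_sub, Finset.sum_sub_distrib, Finset.sum_add_distrib]
    rw [← hlogZ, Finset.sum_const, Finset.card_univ]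
    push_cast
    ring
  | succ n IH =>
    intro F _inst φ hcard hac hψpos hφpos x
    classical
    -- find a leaf
    have hEne : F.edgeFinset.Nonempty := Finset.card_pos.mp (by omega)
    obtain ⟨e00, he00⟩ := hEne
    obtain ⟨a0, b0, hab0⟩ : ∃ a b, F.Adj a b := by
      revert he00
      induction e00 using Sym2.ind with
      | _ a b => exact fun h => ⟨a, b, SimpleGraph.mem_edgeFinset.mp h⟩
    obtain ⟨ℓ, u, hadj, hnb⟩ := exists_leaf hac hab0
    have hlu : ℓ ≠ u := hadj.ne
    have hul : u ≠ ℓ := Ne.symm hlu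
    have he0 : s(ℓ, u) ∈ F.edgeFinset := SimpleGraph.mem_edgeFinset.mpr hadj
    set F' : SimpleGraph V := F.deleteEdges {s(ℓ, u)} with hF'def
    haveI dec' : DecidableRel F'.Adj := fun a b =>
      decidable_of_iff (F.Adj a b ∧ ¬ s(a, b) = s(ℓ, u))
        (by rw [hF'def, SimpleGraph.deleteEdges_adj]; simp)
    have hF'adj : ∀ a b, F'.Adj a b ↔ F.Adj a b ∧ ¬ s(a, b) = s(ℓ, u) := by
      intro a b; rw [hF'def, SimpleGraph.deleteEdges_adj]; simp
    have hE' : F'.edgeFinset = F.edgeFinset.erase s(ℓ, u) := by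
      ext e
      rw [Finset.mem_erase, SimpleGraph.mem_edgeFinset, SimpleGraph.mem_edgeFinset, hF'def,
        SimpleGraph.edgeSet_deleteEdges]
      simp [and_comm]
    have hcard' : F'.edgeFinset.card = n := by
      rw [hE', Finset.card_erase_of_mem he0, hcard]
      omega
    have hac' : F'.IsAcyclic := fun v c hc =>
      hac (c.mapLe (SimpleGraph.deleteEdges_le _)) (hc.mapLe _)
    have hψpos' : ∀ i j, F'.Adj i j → ∀ s t, 0 < ψ2 i j s t := fun i j h =>
      hψpos i j ((hF'adj i j).mp h).1
    have hnotin : ∀ e ∈ F'.edgeFinset, ℓ ∉ e := by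
      intro e he hin
      rw [hE', Finset.mem_erase] at he
      obtain ⟨b, rfl⟩ := Sym2.mem_iff_exists.mp hin
      have hadjb : F.Adj ℓ b := SimpleGraph.mem_edgeFinset.mp he.2
      have hb : b ∈ F.neighborFinset ℓ := (SimpleGraph.mem_neighborFinset _ _ _).mpr hadjb
      rw [hnb, Finset.mem_singleton] at hb
      exact he.1 (by rw [hb])
    -- degrees
    have hnbF'ℓ : F'.neighborFinset ℓ = ∅ := by
      ext b
      simp only [SimpleGraph.mem_neighborFinset, Finset.notMem_empty, iff_false]
      intro h
      rw [hF'adj] at h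
      have hb : b ∈ F.neighborFinset ℓ := (SimpleGraph.mem_neighborFinset _ _ _).mpr h.1
      rw [hnb, Finset.mem_singleton] at hb
      exact h.2 (by rw [hb])
    have hdegℓ' : F'.degree ℓ = 0 := by
      rw [← SimpleGraph.card_neighborFinset_eq_degree, hnbF'ℓ, Finset.card_empty]
    have hdegℓ : F.degree ℓ = 1 := by
      rw [← SimpleGraph.card_neighborFinset_eq_degree, hnb, Finset.card_singleton]
    have hnbF'u : F'.neighborFinset u = (F.neighborFinset u).erase ℓ := by
      ext b
      simp only [SimpleGraph.mem_neighborFinset, Finset.mem_erase]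
      rw [hF'adj]
      constructor
      · rintro ⟨h1, h2⟩
        exact ⟨fun hbl => h2 (by rw [hbl]; exact Sym2.eq_swap), h1⟩
      · rintro ⟨hbl, h1⟩
        refine ⟨h1, fun hEq => hbl ?_⟩
        rw [Sym2.eq_iff] at hEq
        rcases hEq with ⟨h3, h4⟩ | ⟨h3, h4⟩
        · exact absurd h3 hul
        · exact h4
    have hdegu : F.degree u = F'.degree u + 1 := by
      rw [← SimpleGraph.card_neighborFinset_eq_degree,
        ← SimpleGraph.card_neighborFinset_eq_degree, hnbF'u,
        Finset.card_erase_of_mem ((SimpleGraph.mem_neighborFinset _ _ _).mpr hadj.symm)]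
      have h1 : 1 ≤ (F.neighborFinset u).card :=
        Finset.card_pos.mpr ⟨ℓ, (SimpleGraph.mem_neighborFinset _ _ _).mpr hadj.symm⟩
      omega
    have hdegeq : ∀ i, i ≠ ℓ → i ≠ u → F'.degree i = F.degree i := by
      intro i hiℓ hiu
      rw [← SimpleGraph.card_neighborFinset_eq_degree,
        ← SimpleGraph.card_neighborFinset_eq_degree]
      congr 1
      ext b
      simp only [SimpleGraph.mem_neighborFinset]
      rw [hF'adj]
      constructor
      · exact And.left
      · intro h
        refine ⟨h, fun hEq => ?_⟩
        rw [Sym2.eq_iff] at hEq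
        rcases hEq with ⟨h3, _⟩ | ⟨h3, _⟩
        · exact hiℓ h3
        · exact hiu h3
    -- modified vertex potentials
    set Zl : ℝ := ∑ a, φ ℓ a with hZl
    have hZlpos : 0 < Zl := Finset.sum_pos (fun a _ => hφpos ℓ a) univ_nonempty
    set gu : X u → ℝ := fun t => ∑ a, φ ℓ a * ψ2 ℓ u a t with hgu
    have hgupos : ∀ t, 0 < gu t := fun t =>
      Finset.sum_pos (fun a _ => mul_pos (hφpos ℓ a) (hψpos ℓ u hadj a t)) univ_nonempty
    set g : (i : V) → X i → ℝ := fun i t => if i = u then ∑ a, φ ℓ a * ψ2 ℓ i a t else 1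
      with hg
    have hgpos : ∀ i t, 0 < g i t := by
      intro i t
      rw [hg]
      dsimp only
      by_cases h : i = u
      · subst h
        rw [if_pos rfl]
        exact Finset.sum_pos (fun a _ => mul_pos (hφpos ℓ a) (hψpos ℓ i hadj a t))
          univ_nonempty
      · rw [if_neg h]; exact one_pos
    have hgu_eq : ∀ t, g u t = gu t := by
      intro t; rw [hg, hgu]; simp
    set φ' : (i : V) → X i → ℝ := fun i t => φ i t * g i t with hφ'
    have hφ'pos : ∀ i t, 0 < φ' i t := fun i t => mul_pos (hφpos i t) (hgpos i t)
    -- the distributions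
    set PF := PP ψ2 hψsym F φ with hPFdef
    set PF' := PP ψ2 hψsym F' φ' with hPF'def
    set Q := PP ψ2 hψsym F' φ with hQdef
    set Q0 : ((i : V) → X i) → ℝ := fun y =>
      (∏ e ∈ F'.edgeFinset, Sym2.lift ⟨fun i j => ψ2 i j (y i) (y j),
        fun i j => hψsym i j (y i) (y j)⟩ e)
      * ∏ i ∈ Finset.univ.erase ℓ, φ i (y i) with hQ0def
    have hQeq : ∀ y, Q y = φ ℓ (y ℓ) * Q0 y := by
      intro y
      rw [hQdef, hQ0def]
      unfold PP
      dsimp only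
      rw [← Finset.mul_prod_erase Finset.univ (fun i => φ i (y i)) (Finset.mem_univ ℓ)]
      ring
    have hPFeq : ∀ y, PF y = ψ2 ℓ u (y ℓ) (y u) * Q y := by
      intro y
      rw [hPFdef, hQdef]
      unfold PP
      rw [hE', ← Finset.mul_prod_erase F.edgeFinset _ he0, Sym2.lift_mk]
      ring
    have hPF'eq : ∀ y, PF' y = Q y * gu (y u) := by
      intro y
      rw [hPF'def, hQdef]
      unfold PP
      rw [hφ']
      dsimp only
      rw [Finset.prod_mul_distrib]
      have hprodg : ∏ i, g i (y i) = g u (y u) :=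
        Fintype.prod_eq_single u (fun i hi => by rw [hg]; dsimp only; rw [if_neg hi])
      rw [hprodg, hgu_eq]
      ring
    have hQ0indep : ∀ y a, Q0 (Function.update y ℓ a) = Q0 y := by
      intro y a
      rw [hQ0def]
      dsimp only
      congr 1
      · refine Finset.prod_congr rfl fun e he => ?_
        have hne := hnotin e he
        revert hne
        induction e using Sym2.ind with
        | _ i j =>
          intro hne
          rw [Sym2.mem_iff] at hne
          push_neg at hne
          simp only [Sym2.lift_mk]
          rw [Function.update_of_ne (Ne.symm hne.1), Function.update_of_ne (Ne.symm hne.2)]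
      · refine Finset.prod_congr rfl fun i hi => ?_
        rw [Function.update_of_ne (Finset.mem_erase.mp hi).1]
    -- positivity
    have hPFpos : ∀ y, 0 < PF y := PP_pos ψ2 hψsym F φ hψpos hφpos
    have hPF'pos : ∀ y, 0 < PF' y := PP_pos ψ2 hψsym F' φ' hψpos' hφ'pos
    have hQpos : ∀ y, 0 < Q y := PP_pos ψ2 hψsym F' φ hψpos' hφpos
    set c0 : X ℓ := Classical.arbitrary (X ℓ) with hc0
    -- the two split identities
    have hsplitPF : ∀ (A : Finset ((i : V) → X i)),
        (∀ y ∈ A, ∀ a, Function.update y ℓ a ∈ A) →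
        ∑ y ∈ A, PF y = ∑ y ∈ A.filter (fun y => y ℓ = c0), gu (y u) * Q0 y := by
      intro A hA
      calc ∑ y ∈ A, PF y
          = ∑ y ∈ A, (fun (a : X ℓ) (y : (i : V) → X i) =>
              ψ2 ℓ u a (y u) * (φ ℓ a * Q0 y)) (y ℓ) y := by
            refine Finset.sum_congr rfl fun y _ => ?_
            dsimp only
            rw [hPFeq y, hQeq y]
        _ = ∑ y ∈ A.filter (fun y => y ℓ = c0), ∑ a,
              (fun (a : X ℓ) (y : (i : V) → X i) =>
                ψ2 ℓ u a (y u) * (φ ℓ a * Q0 y)) a y :=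
            sum_coord_split ℓ A hA
              (fun (a : X ℓ) (y : (i : V) → X i) => ψ2 ℓ u a (y u) * (φ ℓ a * Q0 y))
              (fun a y b => by
                rw [Function.update_of_ne hul, hQ0indep]) c0
        _ = ∑ y ∈ A.filter (fun y => y ℓ = c0), gu (y u) * Q0 y := by
            refine Finset.sum_congr rfl fun y _ => ?_
            dsimp only
            have h2 : ∀ a : X ℓ, ψ2 ℓ u a (y u) * (φ ℓ a * Q0 y)
                = (φ ℓ a * ψ2 ℓ u a (y u)) * Q0 y := fun a => by ring
            rw [Finset.sum_congr rfl fun a _ => h2 a, ← Finset.sum_mul]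
    have hsplitPF' : ∀ (A : Finset ((i : V) → X i)),
        (∀ y ∈ A, ∀ a, Function.update y ℓ a ∈ A) →
        ∑ y ∈ A, PF' y = Zl * ∑ y ∈ A.filter (fun y => y ℓ = c0), gu (y u) * Q0 y := by
      intro A hA
      calc ∑ y ∈ A, PF' y
          = ∑ y ∈ A, (fun (a : X ℓ) (y : (i : V) → X i) =>
              φ ℓ a * (gu (y u) * Q0 y)) (y ℓ) y := by
            refine Finset.sum_congr rfl fun y _ => ?_
            dsimp only
            rw [hPF'eq y, hQeq y]
            ring
        _ = ∑ y ∈ A.filter (fun y => y ℓ = c0), ∑ a,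
              (fun (a : X ℓ) (y : (i : V) → X i) =>
                φ ℓ a * (gu (y u) * Q0 y)) a y :=
            sum_coord_split ℓ A hA
              (fun (a : X ℓ) (y : (i : V) → X i) => φ ℓ a * (gu (y u) * Q0 y))
              (fun a y b => by
                rw [Function.update_of_ne hul, hQ0indep]) c0
        _ = Zl * ∑ y ∈ A.filter (fun y => y ℓ = c0), gu (y u) * Q0 y := by
            rw [Finset.mul_sum]
            refine Finset.sum_congr rfl fun y _ => ?_
            dsimp only
            rw [← Finset.sum_mul, hZl]
    -- partition functions
    set Z : ℝ := ∑ y, PF y with hZdef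
    set Z' : ℝ := ∑ y, PF' y with hZ'def
    have hZpos : 0 < Z := Finset.sum_pos (fun y _ => hPFpos y) univ_nonempty
    have hZfib : Z = ∑ y ∈ Finset.univ.filter (fun y => y ℓ = c0), gu (y u) * Q0 y := by
      rw [hZdef]
      exact hsplitPF Finset.univ (fun y _ a => Finset.mem_univ _)
    have hZ'eq : Z' = Zl * Z := by
      rw [hZ'def, hsplitPF' Finset.univ (fun y _ a => Finset.mem_univ _), ← hZfib]
    -- marginal relations
    have hm1 : ∀ i, i ≠ ℓ → ∀ s, marg1 PF' i s = Zl * marg1 PF i s := by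
      intro i hi s
      have hcl : ∀ y ∈ Finset.univ.filter (fun y : (i : V) → X i => y i = s), ∀ a,
          Function.update y ℓ a ∈ Finset.univ.filter (fun y : (i : V) → X i => y i = s) := by
        intro y hy a
        rw [Finset.mem_filter] at hy ⊢
        exact ⟨Finset.mem_univ _, by rw [Function.update_of_ne hi]; exact hy.2⟩
      unfold marg1
      rw [hsplitPF _ hcl, hsplitPF' _ hcl]
    have hm2 : ∀ i j, i ≠ ℓ → j ≠ ℓ → ∀ (s : X i) (t : X j),
        marg2 PF' i j s t = Zl * marg2 PF i j s t := by
      intro i j hi hj s t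
      have hcl : ∀ y ∈ Finset.univ.filter (fun y : (i' : V) → X i' => y i = s ∧ y j = t), ∀ a,
          Function.update y ℓ a ∈
            Finset.univ.filter (fun y : (i' : V) → X i' => y i = s ∧ y j = t) := by
        intro y hy a
        rw [Finset.mem_filter] at hy ⊢
        refine ⟨Finset.mem_univ _, ?_, ?_⟩
        · rw [Function.update_of_ne hi]; exact hy.2.1
        · rw [Function.update_of_ne hj]; exact hy.2.2
      unfold marg2
      rw [hsplitPF _ hcl, hsplitPF' _ hcl]
    have hguQ0indep : ∀ (y : (i : V) → X i) (a : X ℓ),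
        gu (Function.update y ℓ a u) * Q0 (Function.update y ℓ a) = gu (y u) * Q0 y := by
      intro y a
      rw [Function.update_of_ne hul, hQ0indep]
    have hm1ℓ : ∀ s, marg1 PF' ℓ s = φ ℓ s * Z := by
      intro s
      unfold marg1
      have h1 : ∑ y ∈ Finset.univ.filter (fun y : (i : V) → X i => y ℓ = s), PF' y
          = ∑ y ∈ Finset.univ.filter (fun y : (i : V) → X i => y ℓ = s),
              φ ℓ s * (gu (y u) * Q0 y) := by
        refine Finset.sum_congr rfl fun y hy => ?_
        rw [hPF'eq y, hQeq y, (Finset.mem_filter.mp hy).2]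
        ring
      rw [h1, ← Finset.mul_sum]
      congr 1
      rw [hZfib]
      exact sum_fiber_const ℓ Finset.univ (fun y _ a => Finset.mem_univ _)
        (fun y => gu (y u) * Q0 y) hguQ0indep s c0
    have hm2ℓu : ∀ (s : X ℓ) (t : X u), gu t * marg2 PF ℓ u s t
        = (φ ℓ s * ψ2 ℓ u s t) * marg1 PF u t := by
      intro s t
      have hclu : ∀ y ∈ Finset.univ.filter (fun y : (i : V) → X i => y u = t), ∀ a,
          Function.update y ℓ a ∈ Finset.univ.filter (fun y : (i : V) → X i => y u = t) := by
        intro y hy a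
        rw [Finset.mem_filter] at hy ⊢
        exact ⟨Finset.mem_univ _, by rw [Function.update_of_ne hul]; exact hy.2⟩
      set S1 : ℝ := ∑ y ∈ (Finset.univ.filter (fun y : (i : V) → X i => y u = t)).filter
          (fun y => y ℓ = c0), Q0 y with hS1
      have hR : marg1 PF u t = gu t * S1 := by
        unfold marg1
        rw [hsplitPF _ hclu, hS1, Finset.mul_sum]
        refine Finset.sum_congr rfl fun y hy => ?_
        rw [Finset.mem_filter, Finset.mem_filter] at hy
        rw [hy.1.2]
      have hL : marg2 PF ℓ u s t = (ψ2 ℓ u s t * φ ℓ s) * S1 := by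
        unfold marg2
        have h4 : Finset.univ.filter (fun y : (i : V) → X i => y ℓ = s ∧ y u = t)
            = (Finset.univ.filter (fun y : (i : V) → X i => y u = t)).filter
                (fun y => y ℓ = s) := by
          rw [Finset.filter_filter]
          apply Finset.filter_congr
          intro y _
          simp [and_comm]
        rw [h4]
        have h5 : ∑ y ∈ (Finset.univ.filter (fun y : (i : V) → X i => y u = t)).filter
              (fun y => y ℓ = s), PF y
            = ∑ y ∈ (Finset.univ.filter (fun y : (i : V) → X i => y u = t)).filter
              (fun y => y ℓ = s), (ψ2 ℓ u s t * φ ℓ s) * Q0 y := by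
          refine Finset.sum_congr rfl fun y hy => ?_
          rw [Finset.mem_filter, Finset.mem_filter] at hy
          rw [hPFeq y, hQeq y, hy.2, hy.1.2]
          ring
        rw [h5, ← Finset.mul_sum, hS1]
        congr 1
        exact sum_fiber_const ℓ _ hclu Q0 hQ0indep s c0
      rw [hL, hR]
      ring
    -- edge sum decomposition
    have hsum1 : ∑ e ∈ F.edgeFinset, logm2 PF x e
        = logm2 PF x s(ℓ, u) + ∑ e ∈ F.edgeFinset.erase s(ℓ, u), logm2 PF x e :=
      (Finset.add_sum_erase _ _ he0).symm
    have hsum2 : ∑ e ∈ F.edgeFinset.erase s(ℓ, u), logm2 PF x e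
        = ∑ e ∈ F'.edgeFinset, logm2 PF' x e - n * Real.log Zl := by
      rw [← hE']
      have hper : ∀ e ∈ F'.edgeFinset, logm2 PF x e = logm2 PF' x e - Real.log Zl := by
        intro e he
        have hne := hnotin e he
        have headj : e ∈ F.edgeFinset := by
          rw [hE'] at he; exact (Finset.mem_erase.mp he).2
        revert hne headj
        induction e using Sym2.ind with
        | _ i j =>
          intro hne headj
          rw [Sym2.mem_iff] at hne
          push_neg at hne
          have hij : F.Adj i j := SimpleGraph.mem_edgeFinset.mp headj
          rw [logm2_mk, logm2_mk, hm2 i j (Ne.symm hne.1) (Ne.symm hne.2),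
            Real.log_mul (ne_of_gt hZlpos) (ne_of_gt (marg2_pos PF hPFpos hij.ne _ _))]
          ring
      rw [Finset.sum_congr rfl hper, Finset.sum_sub_distrib, Finset.sum_const, hcard']
      rw [nsmul_eq_mul]
    have hIH := IH F' φ' hcard' hac' hψpos' hφ'pos x
    -- rewrite pieces
    have hlogPF' : Real.log (PF' x)
        = Real.log (PF x) - Real.log (ψ2 ℓ u (x ℓ) (x u)) + Real.log (gu (x u)) := by
      rw [hPF'eq x, Real.log_mul (ne_of_gt (hQpos x)) (ne_of_gt (hgupos _))]
      have h2 : Real.log (PF x) = Real.log (ψ2 ℓ u (x ℓ) (x u)) + Real.log (Q x) := by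
        rw [hPFeq x, Real.log_mul (ne_of_gt (hψpos ℓ u hadj _ _)) (ne_of_gt (hQpos x))]
      linarith
    have hlogZ' : Real.log Z' = Real.log Zl + Real.log Z := by
      rw [hZ'eq, Real.log_mul (ne_of_gt hZlpos) (ne_of_gt hZpos)]
    -- vertex sums
    have hvs : ∑ i, ((F'.degree i : ℝ) - 1) * Real.log (marg1 PF' i (x i))
        = -(Real.log (φ ℓ (x ℓ)) + Real.log Z)
          + ((∑ i ∈ Finset.univ.erase ℓ,
              ((F.degree i : ℝ) - 1) * Real.log (marg1 PF i (x i)))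
            - Real.log (marg1 PF u (x u)))
          + (2 * n - (Fintype.card V : ℝ) + 1) * Real.log Zl := by
      rw [← Finset.add_sum_erase _ _ (Finset.mem_univ ℓ)]
      have h1 : ((F'.degree ℓ : ℝ) - 1) * Real.log (marg1 PF' ℓ (x ℓ))
          = -(Real.log (φ ℓ (x ℓ)) + Real.log Z) := by
        rw [hdegℓ', hm1ℓ, Real.log_mul (ne_of_gt (hφpos ℓ _)) (ne_of_gt hZpos)]
        norm_num
      rw [h1]
      have h2 : ∀ i ∈ Finset.univ.erase ℓ,
          ((F'.degree i : ℝ) - 1) * Real.log (marg1 PF' i (x i))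
          = ((F'.degree i : ℝ) - 1) * Real.log (marg1 PF i (x i))
            + ((F'.degree i : ℝ) - 1) * Real.log Zl := by
        intro i hi
        rw [hm1 i (Finset.mem_erase.mp hi).1,
          Real.log_mul (ne_of_gt hZlpos) (ne_of_gt (marg1_pos PF hPFpos i _))]
        ring
      rw [Finset.sum_congr rfl h2, Finset.sum_add_distrib, ← Finset.sum_mul]
      have h3 : ∑ i ∈ Finset.univ.erase ℓ, ((F'.degree i : ℝ) - 1)
          = 2 * n - (Fintype.card V : ℝ) + 1 := by
        have hhs : ∑ i, F'.degree i = 2 * n := by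
          rw [SimpleGraph.sum_degrees_eq_twice_card_edges, hcard']
        have h4 : ∑ i ∈ Finset.univ.erase ℓ, ((F'.degree i : ℝ))
            = 2 * n := by
          rw [Finset.sum_erase_eq_sub (Finset.mem_univ ℓ), hdegℓ', ← Nat.cast_sum, hhs]
          push_cast
          ring
        rw [Finset.sum_sub_distrib, h4, Finset.sum_const,
          Finset.card_erase_of_mem (Finset.mem_univ ℓ), Finset.card_univ]
        have hcV : 1 ≤ Fintype.card V := @Fintype.card_pos V _ ⟨ℓ⟩
        rw [nsmul_eq_mul, Nat.cast_sub hcV]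
        push_cast
        ring
      have h5 : ∑ i ∈ Finset.univ.erase ℓ,
            ((F'.degree i : ℝ) - 1) * Real.log (marg1 PF i (x i))
          = (∑ i ∈ Finset.univ.erase ℓ,
              ((F.degree i : ℝ) - 1) * Real.log (marg1 PF i (x i)))
            - Real.log (marg1 PF u (x u)) := by
        have h6 : ∀ i ∈ Finset.univ.erase ℓ,
            ((F'.degree i : ℝ) - 1) * Real.log (marg1 PF i (x i))
            = ((F.degree i : ℝ) - 1) * Real.log (marg1 PF i (x i))
              - (if i = u then Real.log (marg1 PF u (x u)) else 0) := by
          intro i hi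
          by_cases hiu : i = u
          · subst hiu
            rw [if_pos rfl]
            have h7 : (F'.degree i : ℝ) = (F.degree i : ℝ) - 1 := by
              rw [hdegu]; push_cast; ring
            rw [h7]; ring
          · rw [if_neg hiu, hdegeq i (Finset.mem_erase.mp hi).1 hiu]; ring
        rw [Finset.sum_congr rfl h6, Finset.sum_sub_distrib]
        congr 1
        rw [Finset.sum_ite_eq' (Finset.univ.erase ℓ) u
          (fun _ => Real.log (marg1 PF u (x u)))]
        rw [if_pos (Finset.mem_erase.mpr ⟨hul, Finset.mem_univ u⟩)]
      rw [h5, h3]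
      ring
    have hgoalvs : ∑ i, ((F.degree i : ℝ) - 1) * Real.log (marg1 PF i (x i))
        = ∑ i ∈ Finset.univ.erase ℓ, ((F.degree i : ℝ) - 1) * Real.log (marg1 PF i (x i)) := by
      rw [← Finset.add_sum_erase _ _ (Finset.mem_univ ℓ), hdegℓ]
      norm_num
    have he0term : logm2 PF x s(ℓ, u)
        = Real.log (φ ℓ (x ℓ)) + Real.log (ψ2 ℓ u (x ℓ) (x u))
          + Real.log (marg1 PF u (x u)) - Real.log (gu (x u)) := by
      rw [logm2_mk]
      have h := congrArg Real.log (hm2ℓu (x ℓ) (x u))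
      rw [Real.log_mul (ne_of_gt (hgupos _))
          (ne_of_gt (marg2_pos PF hPFpos hlu _ _)),
        Real.log_mul (ne_of_gt (mul_pos (hφpos ℓ _) (hψpos ℓ u hadj _ _)))
          (ne_of_gt (marg1_pos PF hPFpos u _)),
        Real.log_mul (ne_of_gt (hφpos ℓ _)) (ne_of_gt (hψpos ℓ u hadj _ _))] at h
      linarith
    rw [hsum1, hsum2, hIH, hlogPF', hvs, hlogZ', he0term, hgoalvs]
    push_cast
    ring

noncomputable def logpsi (ψ2 : (i j : V) → X i → X j → ℝ)
    (hψsym : ∀ i j s t, ψ2 i j s t = ψ2 j i t s) (x : (i : V) → X i) : Sym2 V → ℝ :=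
  Sym2.lift ⟨fun i j => Real.log (ψ2 i j (x i) (x j)),
    fun i j => congrArg Real.log (hψsym i j (x i) (x j))⟩

@[simp] lemma logpsi_mk (ψ2 : (i j : V) → X i → X j → ℝ)
    (hψsym : ∀ i j s t, ψ2 i j s t = ψ2 j i t s) (x : (i : V) → X i) (i j : V) :
    logpsi ψ2 hψsym x s(i, j) = Real.log (ψ2 i j (x i) (x j)) := rfl

end BetheAux

/-- The per-edge Bethe term `Σ_{s,t} b_{ij}(s,t) · ln (b_{ij}(s,t) / ψ_{ij}(s,t))`
is a symmetric function of the (ordered) edge, hence descends to `Sym2 V`. -/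
theorem betheEdgeTerm_symm {V : Type*} {X : V → Type*} [∀ i, Fintype (X i)]
    (b2 ψ2 : (i j : V) → X i → X j → ℝ)
    (hbsym : ∀ i j s t, b2 i j s t = b2 j i t s)
    (hψsym : ∀ i j s t, ψ2 i j s t = ψ2 j i t s) (i j : V) :
    (∑ s : X i, ∑ t : X j, b2 i j s t * Real.log (b2 i j s t / ψ2 i j s t))
      = ∑ t : X j, ∑ s : X i, b2 j i t s * Real.log (b2 j i t s / ψ2 j i t s) := by
  rw [Finset.sum_comm]
  exact Finset.sum_congr rfl fun t _ => Finset.sum_congr rfl fun s _ => by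
    rw [hbsym, hψsym]

/-- The Bethe free energy of a belief system `(b1, b2)` relative to edge
potentials `ψ2` on the tree `T`. -/
noncomputable def betheFreeEnergy (T : SimpleGraph V) [DecidableRel T.Adj]
    (b1 : (i : V) → X i → ℝ) (b2 ψ2 : (i j : V) → X i → X j → ℝ)
    (hbsym : ∀ i j s t, b2 i j s t = b2 j i t s)
    (hψsym : ∀ i j s t, ψ2 i j s t = ψ2 j i t s) : ℝ :=
  (∑ e ∈ T.edgeFinset,
      Sym2.lift ⟨fun i j => ∑ s : X i, ∑ t : X j,
          b2 i j s t * Real.log (b2 i j s t / ψ2 i j s t),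
        betheEdgeTerm_symm b2 ψ2 hbsym hψsym⟩ e)
    - ∑ i : V, ((T.degree i : ℝ) - 1) * ∑ s : X i, b1 i s * Real.log (b1 i s)

/-- **The Bethe free energy at the exact marginals of a tree MRF equals the
negative log-partition function.**
Let `p(x) = p̃(x)/Z` be the pairwise Markov random field on the tree `T`,
where `p̃(x) = Π_{{i,j}∈E(T)} ψ_{ij}(x_i, x_j)` with strictly positive
symmetric edge potentials and `Z = Σ_x p̃(x)`.  Then the Bethe free energy
evaluated at the exact single-variable and pairwise marginals of `p` equals
`-ln Z`. -/
theorem betheFreeEnergy_exact_marginals (V : Type*) [Fintype V] [DecidableEq V] [Nonempty V]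
    (X : V → Type*) [∀ i, Fintype (X i)] [∀ i, Nonempty (X i)] [∀ i, DecidableEq (X i)]
    (T : SimpleGraph V) [DecidableRel T.Adj] (hT : T.IsTree)
    (ψ2 : (i j : V) → X i → X j → ℝ)
    (hψsym : ∀ i j s t, ψ2 i j s t = ψ2 j i t s)
    (hψpos : ∀ i j, T.Adj i j → ∀ s t, 0 < ψ2 i j s t)
    (ptil : ((i : V) → X i) → ℝ)
    (hptil : ∀ x, ptil x = ∏ e ∈ T.edgeFinset,
      Sym2.lift ⟨fun i j => ψ2 i j (x i) (x j), fun i j => hψsym i j (x i) (x j)⟩ e)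
    (p : ((i : V) → X i) → ℝ)
    (hp : ∀ x, p x = ptil x / ∑ y : (i : V) → X i, ptil y) :
    betheFreeEnergy T (marg1 p) (marg2 p) ψ2 (marg2_symm p) hψsym
      = -Real.log (∑ y : (i : V) → X i, ptil y) := by
  classical
  set Z : ℝ := ∑ y : (i : V) → X i, ptil y with hZdef
  have hptilpos : ∀ y, 0 < ptil y := by
    intro y
    rw [hptil y]
    refine Finset.prod_pos ?_
    intro e he
    induction e using Sym2.ind with
    | _ i j =>
      rw [Sym2.lift_mk]
      exact hψpos i j (by simpa using he) _ _
  have hZpos : 0 < Z := Finset.sum_pos (fun y _ => hptilpos y) univ_nonempty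
  have hppos : ∀ y, 0 < p y := fun y => by
    rw [hp y]; exact div_pos (hptilpos y) hZpos
  have hcV : 1 ≤ Fintype.card V := Fintype.card_pos
  have hcardE : T.edgeFinset.card = Fintype.card V - 1 := by
    have h := hT.card_edgeFinset
    omega
  -- relate to PP with trivial vertex potentials
  have hPPfun : PP ψ2 hψsym T (fun i (_ : X i) => (1 : ℝ)) = ptil := by
    funext y
    unfold PP
    rw [hptil y]
    simp
  have hkey := key ψ2 hψsym T.edgeFinset.card T (fun i _ => (1 : ℝ)) rfl hT.IsAcyclic
    hψpos (fun i s => one_pos)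
  rw [hPPfun] at hkey
  have hkey' : ∀ x, ∑ e ∈ T.edgeFinset, logm2 ptil x e
      = Real.log (ptil x)
        + ∑ i, ((T.degree i : ℝ) - 1) * Real.log (marg1 ptil i (x i)) := by
    intro x
    have h := hkey x
    rw [hcardE, Nat.cast_sub hcV] at h
    rw [h, ← hZdef]
    push_cast
    ring
  -- marginals of p versus ptil
  have hm1p : ∀ (i : V) (s : X i), marg1 p i s = marg1 ptil i s / Z := by
    intro i s
    unfold marg1
    rw [Finset.sum_congr rfl fun y _ => hp y, ← Finset.sum_div]
  have hm2p : ∀ (i j : V) (s : X i) (t : X j), marg2 p i j s t = marg2 ptil i j s t / Z := by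
    intro i j s t
    unfold marg2
    rw [Finset.sum_congr rfl fun y _ => hp y, ← Finset.sum_div]
  have hsum_p : ∑ y, p y = 1 := by
    rw [Finset.sum_congr rfl fun y _ => hp y, ← Finset.sum_div, ← hZdef,
      div_self (ne_of_gt hZpos)]
  -- log of ptil as edge sum
  have hlogptil : ∀ x, Real.log (ptil x) = ∑ e ∈ T.edgeFinset, logpsi ψ2 hψsym x e := by
    intro x
    rw [hptil x, Real.log_prod]
    · refine Finset.sum_congr rfl fun e he => ?_
      induction e using Sym2.ind with
      | _ i j => rw [Sym2.lift_mk, logpsi_mk]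
    · intro e he
      induction e using Sym2.ind with
      | _ i j =>
        rw [Sym2.lift_mk]
        exact ne_of_gt (hψpos i j (by simpa using he) _ _)
  -- handshake
  have hdegsum : ∑ i, ((T.degree i : ℝ) - 1) = (Fintype.card V : ℝ) - 2 := by
    have h1 : ∑ i, T.degree i = 2 * (Fintype.card V - 1) := by
      rw [SimpleGraph.sum_degrees_eq_twice_card_edges, hcardE]
    rw [Finset.sum_sub_distrib, ← Nat.cast_sum, h1, Finset.sum_const, Finset.card_univ,
      nsmul_eq_mul, mul_one, Nat.cast_mul, Nat.cast_sub hcV]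
    push_cast
    ring
  -- pointwise bracket identity
  have hbracket : ∀ x, (∑ e ∈ T.edgeFinset, logm2 p x e)
      - (∑ e ∈ T.edgeFinset, logpsi ψ2 hψsym x e)
      - (∑ i, ((T.degree i : ℝ) - 1) * Real.log (marg1 p i (x i)))
      = -Real.log Z := by
    intro x
    have h1 : ∀ e ∈ T.edgeFinset, logm2 p x e = logm2 ptil x e - Real.log Z := by
      intro e he
      induction e using Sym2.ind with
      | _ i j =>
        have hij : i ≠ j := (SimpleGraph.mem_edgeFinset.mp he).ne
        rw [logm2_mk, logm2_mk, hm2p i j, Real.log_div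
          (ne_of_gt (marg2_pos ptil hptilpos hij _ _)) (ne_of_gt hZpos)]
    have h2 : ∀ i ∈ (Finset.univ : Finset V),
        ((T.degree i : ℝ) - 1) * Real.log (marg1 p i (x i))
        = ((T.degree i : ℝ) - 1) * Real.log (marg1 ptil i (x i))
          - ((T.degree i : ℝ) - 1) * Real.log Z := by
      intro i _
      rw [hm1p i, Real.log_div (ne_of_gt (marg1_pos ptil hptilpos i _)) (ne_of_gt hZpos)]
      ring
    rw [Finset.sum_congr rfl h1, Finset.sum_sub_distrib, Finset.sum_const, hcardE,
      Finset.sum_congr rfl h2, Finset.sum_sub_distrib, ← Finset.sum_mul, hdegsum,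
      hkey' x, hlogptil x, nsmul_eq_mul, Nat.cast_sub hcV]
    push_cast
    ring
  -- transform the Bethe functional
  unfold betheFreeEnergy
  have hedge : ∀ e ∈ T.edgeFinset,
      (Sym2.lift ⟨fun i j => ∑ s : X i, ∑ t : X j,
          marg2 p i j s t * Real.log (marg2 p i j s t / ψ2 i j s t),
        betheEdgeTerm_symm (marg2 p) ψ2 (marg2_symm p) hψsym⟩ e)
      = ∑ x, p x * (logm2 p x e - logpsi ψ2 hψsym x e) := by
    intro e he
    induction e using Sym2.ind with
    | _ i j =>
      have hadj : T.Adj i j := SimpleGraph.mem_edgeFinset.mp he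
      have hij : i ≠ j := hadj.ne
      simp only [Sym2.lift_mk]
      have h1 : ∀ (s : X i) (t : X j),
          marg2 p i j s t * Real.log (marg2 p i j s t / ψ2 i j s t)
          = marg2 p i j s t
            * (fun s t => Real.log (marg2 p i j s t) - Real.log (ψ2 i j s t)) s t := by
        intro s t
        rw [Real.log_div (ne_of_gt (marg2_pos p hppos hij s t))
          (ne_of_gt (hψpos i j hadj s t))]
      rw [Finset.sum_congr rfl fun s _ => Finset.sum_congr rfl fun t _ => h1 s t,
        sum_marg2_mul p i j
          (fun s t => Real.log (marg2 p i j s t) - Real.log (ψ2 i j s t))]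
      exact Finset.sum_congr rfl fun x _ => by rw [logm2_mk, logpsi_mk]
  have hnode : ∀ i ∈ (Finset.univ : Finset V),
      ((T.degree i : ℝ) - 1) * ∑ s : X i, marg1 p i s * Real.log (marg1 p i s)
      = ∑ x, p x * (((T.degree i : ℝ) - 1) * Real.log (marg1 p i (x i))) := by
    intro i _
    rw [sum_marg1_mul p i (fun s => Real.log (marg1 p i s)), Finset.mul_sum]
    exact Finset.sum_congr rfl fun x _ => by ring
  have hedgeswap : ∑ e ∈ T.edgeFinset, ∑ x, p x * (logm2 p x e - logpsi ψ2 hψsym x e)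
      = ∑ x, ∑ e ∈ T.edgeFinset, p x * (logm2 p x e - logpsi ψ2 hψsym x e) :=
    Finset.sum_comm
  have hnodeswap : ∑ i, ∑ x, p x * (((T.degree i : ℝ) - 1) * Real.log (marg1 p i (x i)))
      = ∑ x, ∑ i, p x * (((T.degree i : ℝ) - 1) * Real.log (marg1 p i (x i))) :=
    Finset.sum_comm
  rw [Finset.sum_congr rfl hedge, Finset.sum_congr rfl hnode, hedgeswap, hnodeswap]
  have hfinal : ∀ x ∈ (Finset.univ : Finset ((i : V) → X i)),
      (∑ e ∈ T.edgeFinset, p x * (logm2 p x e - logpsi ψ2 hψsym x e))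
      = p x * (-Real.log Z) + ∑ i, p x * (((T.degree i : ℝ) - 1)
          * Real.log (marg1 p i (x i))) := by
    intro x _
    rw [← Finset.mul_sum, ← Finset.mul_sum]
    have h3 := hbracket x
    have h4 : ∑ e ∈ T.edgeFinset, (logm2 p x e - logpsi ψ2 hψsym x e)
        = -Real.log Z + ∑ i, (((T.degree i : ℝ) - 1) * Real.log (marg1 p i (x i))) := by
      rw [Finset.sum_sub_distrib]
      linarith
    rw [h4, mul_add]
  rw [Finset.sum_congr rfl hfinal, Finset.sum_add_distrib]
  rw [← Finset.sum_mul, hsum_p]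
  simp
end
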